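/- arXiv:2005.09244 — 10 statements merged into one kernel-verified Lean document; each statement's English description precedes it below -/
import Mathlib

section
/- For every n ≥ 1 and every balance vector p : Fin n → ℤ with ∑ i, p i = 0, there exists a list L of transactions that settles p with L.length ≤ n − 1. -/
/-- A transaction `(i, j, a)`: participant `i` pays amount `a` to participant `j`. -/
abbrev Txn (m : ℕ) := Fin m × Fin m × ℤ

/-- All transactions in the list are valid: distinct sender/receiver, positive amount. -/
def ValidTxns {m : ℕ} (L : List (Txn m)) : Prop :=
  ∀ t ∈ L, t.1 ≠ t.2.1 ∧ 0 < t.2.2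

/-- `L` settles the balance vector `p`: for every participant `k`, the total amount sent
by `k` minus the total amount received by `k` equals `p k`. -/
def Settles {m : ℕ} (L : List (Txn m)) (p : Fin m → ℤ) : Prop :=
  ∀ k : Fin m,
    ((L.filter (fun t => t.1 = k)).map (fun t => t.2.2)).sum
      - ((L.filter (fun t => t.2.1 = k)).map (fun t => t.2.2)).sum = p k

private def liftTxn {n : ℕ} (t : Txn (n+1)) : Txn (n+2) :=
  (t.1.castSucc, t.2.1.castSucc, t.2.2)

private lemma lift_sum {n : ℕ} (L : List (Txn (n+1)))
    (g : Txn (n+2) → Bool) (g' : Txn (n+1) → Bool)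
    (h : ∀ t, g (liftTxn t) = g' t) :
    (((L.map liftTxn).filter g).map (fun t => t.2.2)).sum
      = ((L.filter g').map (fun t => t.2.2)).sum := by
  rw [List.filter_map, List.map_map]
  have he : L.filter (g ∘ liftTxn) = L.filter g' :=
    List.filter_congr (fun t _ => by simpa [Function.comp] using h t)
  rw [he]
  rfl

private lemma aux (n : ℕ) : ∀ p : Fin (n+1) → ℤ, ∑ i, p i = 0 →
    ∃ L : List (Txn (n+1)), ValidTxns L ∧ Settles L p ∧ L.length ≤ n := by
  induction n with
  | zero =>
    intro p hsum
    refine ⟨[], by intro t ht; simp at ht, ?_, le_refl 0⟩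
    intro k
    fin_cases k
    simpa using hsum.symm
  | succ n ih =>
    intro p hsum
    set a := p (Fin.last (n+1)) with ha
    set p' : Fin (n+1) → ℤ := fun i => p i.castSucc + if i = 0 then a else 0
      with hp'
    have hc : (∑ i : Fin (n+1), p i.castSucc) + a = 0 := by
      rw [ha, ← Fin.sum_univ_castSucc p]; exact hsum
    have hsum' : ∑ i, p' i = 0 := by
      rw [hp', Finset.sum_add_distrib,
        Finset.sum_ite_eq' Finset.univ (0 : Fin (n+1)) (fun _ => a)]
      simpa using hc
    obtain ⟨L', hV, hS, hlen⟩ := ih p' hsum'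
    set L'' := L'.map liftTxn with hL''
    have hnolast1 : (((L'').filter (fun t => t.1 = Fin.last (n+1))).map
        (fun t : Txn (n+2) => t.2.2)).sum = 0 := by
      rw [hL'', lift_sum L' _ (fun _ => false)
        (fun t => by simp [liftTxn, Fin.ne_of_lt, (Fin.castSucc_lt_last t.1).ne])]
      simp
    have hnolast2 : (((L'').filter (fun t => t.2.1 = Fin.last (n+1))).map
        (fun t : Txn (n+2) => t.2.2)).sum = 0 := by
      rw [hL'', lift_sum L' _ (fun _ => false)
        (fun t => by simp [liftTxn, (Fin.castSucc_lt_last t.2.1).ne])]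
      simp
    have hsent : ∀ k : Fin (n+1),
        (((L'').filter (fun t => t.1 = k.castSucc)).map (fun t : Txn (n+2) => t.2.2)).sum
          = ((L'.filter (fun t => t.1 = k)).map (fun t => t.2.2)).sum := by
      intro k
      rw [hL'']
      exact lift_sum L' _ _ (fun t => by simp [liftTxn, Fin.castSucc_inj])
    have hrecv : ∀ k : Fin (n+1),
        (((L'').filter (fun t => t.2.1 = k.castSucc)).map (fun t : Txn (n+2) => t.2.2)).sum
          = ((L'.filter (fun t => t.2.1 = k)).map (fun t => t.2.2)).sum := by
      intro k
      rw [hL'']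
      exact lift_sum L' _ _ (fun t => by simp [liftTxn, Fin.castSucc_inj])
    have hVlift : ValidTxns L'' := by
      intro t ht
      rw [hL''] at ht
      obtain ⟨s, hs, rfl⟩ := List.mem_map.mp ht
      obtain ⟨h1, h2⟩ := hV s hs
      exact ⟨fun h => h1 (Fin.castSucc_inj.mp h), h2⟩
    -- helper: settles for untouched participants
    rcases eq_or_ne a 0 with h0 | h0
    · refine ⟨L'', hVlift, ?_, by simpa [hL''] using hlen.trans (Nat.le_succ n)⟩
      intro k
      rcases Fin.eq_castSucc_or_eq_last k with ⟨k', rfl⟩ | rfl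
      · rw [hsent, hrecv, hS k']
        rcases eq_or_ne k' 0 with rfl | hk0
        · simp [hp', h0]
        · simp [hp', hk0]
      · rw [hnolast1, hnolast2, ← ha, h0]; ring
    · rcases lt_or_gt_of_ne h0 with hneg | hpos
      · -- a < 0 : participant 0 pays -a to last
        have hne1 : (Fin.last (n+1)) ≠ ((0 : Fin (n+1)).castSucc : Fin (n+2)) :=
          ((Fin.castSucc_lt_last _).ne).symm
        have hne2 : ((0 : Fin (n+1)).castSucc : Fin (n+2)) ≠ Fin.last (n+1) :=
          (Fin.castSucc_lt_last _).ne
        refine ⟨((0 : Fin (n+1)).castSucc, Fin.last (n+1), -a) :: L'', ?_, ?_, ?_⟩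
        · intro t ht
          rcases List.mem_cons.mp ht with rfl | ht
          · refine ⟨hne2, ?_⟩; simp only; linarith
          · exact hVlift t ht
        · intro k
          rcases Fin.eq_castSucc_or_eq_last k with ⟨k', rfl⟩ | rfl
          · rcases eq_or_ne k' 0 with rfl | hk0
            · rw [List.filter_cons, List.filter_cons, if_pos (by simp),
                if_neg (by simp only [decide_eq_true_eq]; exact (Fin.castSucc_lt_last _).ne')]
              simp only [List.map_cons, List.sum_cons]
              rw [hsent 0, hrecv 0]
              have h := hS 0
              rw [hp'] at h
              norm_num at h
              simp only [Fin.castSucc_zero]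
              linarith
            · rw [List.filter_cons, List.filter_cons,
                if_neg (by simp only [decide_eq_true_eq, Fin.castSucc_inj]; exact Ne.symm hk0),
                if_neg (by simp only [decide_eq_true_eq]; exact (Fin.castSucc_lt_last _).ne')]
              rw [hsent k', hrecv k', hS k']
              simp [hp', hk0]
          · rw [List.filter_cons, List.filter_cons, if_neg (by simp [hne2]),
              if_pos (by simp)]
            simp only [List.map_cons, List.sum_cons]
            rw [hnolast1, hnolast2, ← ha]
            ring
        · simpa [hL''] using Nat.succ_le_succ hlen
      · -- a > 0 : last pays a to participant 0
        have hne1 : (Fin.last (n+1)) ≠ ((0 : Fin (n+1)).castSucc : Fin (n+2)) :=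
          ((Fin.castSucc_lt_last _).ne).symm
        have hne2 : ((0 : Fin (n+1)).castSucc : Fin (n+2)) ≠ Fin.last (n+1) :=
          (Fin.castSucc_lt_last _).ne
        refine ⟨(Fin.last (n+1), (0 : Fin (n+1)).castSucc, a) :: L'', ?_, ?_, ?_⟩
        · intro t ht
          rcases List.mem_cons.mp ht with rfl | ht
          · refine ⟨hne1, ?_⟩; simp only; exact hpos
          · exact hVlift t ht
        · intro k
          rcases Fin.eq_castSucc_or_eq_last k with ⟨k', rfl⟩ | rfl
          · rcases eq_or_ne k' 0 with rfl | hk0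
            · rw [List.filter_cons, List.filter_cons, if_neg (by simp only [decide_eq_true_eq]; exact (Fin.castSucc_lt_last _).ne'),
                if_pos (by simp)]
              simp only [List.map_cons, List.sum_cons]
              rw [hsent 0, hrecv 0]
              have h := hS 0
              rw [hp'] at h
              norm_num at h
              simp only [Fin.castSucc_zero]
              linarith
            · rw [List.filter_cons, List.filter_cons,
                if_neg (by simp only [decide_eq_true_eq]; exact (Fin.castSucc_lt_last _).ne'),
                if_neg (by simp only [decide_eq_true_eq, Fin.castSucc_inj]; exact Ne.symm hk0)]
              rw [hsent k', hrecv k', hS k']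
              simp [hp', hk0]
          · rw [List.filter_cons, List.filter_cons, if_pos (by simp),
              if_neg (by simp [hne2])]
            simp only [List.map_cons, List.sum_cons]
            rw [hnolast1, hnolast2, ← ha]
            ring
        · simpa [hL''] using Nat.succ_le_succ hlen

/-- the greedy upper bound. For every `n ≥ 1` and every balance vector
`p : Fin n → ℤ` summing to zero, there is a list of transactions settling `p`
of length at most `n - 1`. -/
theorem greedy_upper_bound (n : ℕ) (hn : 1 ≤ n) (p : Fin n → ℤ)
    (hsum : ∑ i, p i = 0) :
    ∃ L : List (Txn n), ValidTxns L ∧ Settles L p ∧ L.length ≤ n - 1 := by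
  obtain ⟨m, rfl⟩ := Nat.exists_eq_add_of_le' hn
  simpa using aux m (fun i => p i) (by simpa using hsum)
end

section
/- Let p : Fin n → ℤ with ∑ i, p i = 0 and suppose p is not identically zero. Then there exist indices i ≠ j with p i > 0 and p j < 0 such that, setting a = min (p i) (−p j) (so a > 0), the updated balance vector p' defined by p' i = p i − a, p' j = p j + a, and p' k = p k for k ∉ {i, j}, satisfies ∑ k, p' k = 0 and the set {k | p' k ≠ 0} is strictly contained in {k | p k ≠ 0}. -/
lemma sum_update_two {n : ℕ} (p : Fin n → ℤ) {i j : Fin n} (hij : i ≠ j) (x y : ℤ) :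
    ∑ k, Function.update (Function.update p i x) j y k
      = (∑ k, p k) - p i - p j + x + y := by
  rw [Finset.sum_update_of_mem (Finset.mem_univ j),
      Finset.sum_update_of_mem (by simp [hij] : i ∈ Finset.univ \ {j})]
  have h1 : (Finset.univ \ {j}) \ {i} = Finset.univ \ ({j, i} : Finset (Fin n)) := by
    ext x; simp
  rw [h1, Finset.sum_sdiff_eq_sub (Finset.subset_univ _),
    Finset.sum_pair (Ne.symm hij)]
  ring

/-- the induction step of the greedy settlement algorithm.  If
`p : Fin n → ℤ` sums to zero and is not identically zero, then there are `i ≠ j`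
with `p i > 0` and `p j < 0` such that, for `a = min (p i) (-p j)`, we have `a > 0`
and the updated vector (decrease `p i` by `a`, increase `p j` by `a`) still sums to
zero and has a strictly smaller support. -/
theorem greedy_step (n : ℕ) (p : Fin n → ℤ) (hsum : ∑ i, p i = 0)
    (hne : ∃ k, p k ≠ 0) :
    ∃ i j : Fin n, i ≠ j ∧ 0 < p i ∧ p j < 0 ∧
      0 < min (p i) (-p j) ∧
      (∑ k, Function.update (Function.update p i (p i - min (p i) (-p j))) j
          (p j + min (p i) (-p j)) k = 0) ∧
      {k | Function.update (Function.update p i (p i - min (p i) (-p j))) j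
          (p j + min (p i) (-p j)) k ≠ 0} ⊂ {k | p k ≠ 0} := by
  obtain ⟨k, hk⟩ := hne
  have hi : ∃ i, 0 < p i := by
    by_contra h
    push_neg at h
    have := (Finset.sum_eq_zero_iff_of_nonpos (fun i _ => h i)).mp hsum
    exact hk (this k (Finset.mem_univ k))
  have hj : ∃ j, p j < 0 := by
    by_contra h
    push_neg at h
    have := (Finset.sum_eq_zero_iff_of_nonneg (fun i _ => h i)).mp hsum
    exact hk (this k (Finset.mem_univ k))
  obtain ⟨i, hi⟩ := hi
  obtain ⟨j, hj⟩ := hj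
  have hij : i ≠ j := by rintro rfl; omega
  set a := min (p i) (-p j) with ha
  have hapos : 0 < a := lt_min hi (by omega)
  refine ⟨i, j, hij, hi, hj, hapos, ?_, ?_⟩
  · rw [sum_update_two p hij, hsum]; ring
  · constructor
    · intro x hx
      simp only [Set.mem_setOf_eq, Function.update] at hx ⊢
      split_ifs at hx with h1 h2 <;> simp_all <;> omega
    · intro hsub
      rcases le_or_gt (p i) (-p j) with h | h
      · have hmem : i ∈ {k | p k ≠ 0} := by simp; omega
        have := hsub hmem
        rw [Set.mem_setOf_eq, Function.update_of_ne hij, Function.update_self] at this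
        omega
      · have hmem : j ∈ {k | p k ≠ 0} := by simp; omega
        have := hsub hmem
        rw [Set.mem_setOf_eq, Function.update_self] at this
        omega
end

section
/- Let p : Fin n → ℤ with ∑ i, p i = 0 and let L be a list of transactions that settles p. If S ⊆ Fin n is a set of participants such that every transaction (i, j, a) in L has either both i ∈ S and j ∈ S, or both i ∉ S and j ∉ S (no transaction crosses between S and its complement), then ∑ i ∈ S, p i = 0. -/
lemma sum_filter_map_eq {α : Type*} (L : List α) (P : α → Prop) [DecidablePred P]
    (f : α → ℤ) :
    ((L.filter (fun t => P t)).map f).sum = (L.map (fun t => if P t then f t else 0)).sum := by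
  induction L with
  | nil => simp
  | cons a L ih =>
    simp only [List.filter_cons, List.map_cons, List.sum_cons]
    split <;> simp_all

lemma sum_map_sub {α : Type*} (L : List α) (f g : α → ℤ) :
    (L.map (fun t => f t - g t)).sum = (L.map f).sum - (L.map g).sum := by
  induction L with
  | nil => simp
  | cons a L ih => simp only [List.map_cons, List.sum_cons, ih]; ring

lemma finset_sum_list_sum {α β : Type*} (S : Finset β) (L : List α) (f : β → α → ℤ) :
    ∑ k ∈ S, (L.map (f k)).sum = (L.map (fun t => ∑ k ∈ S, f k t)).sum := by
  induction L with
  | nil => simp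
  | cons a L ih => simp [Finset.sum_add_distrib, ih]

/-- if no transaction of a settling list crosses between `S` and its
complement, then the balances within `S` sum to zero. -/
theorem no_cross_subset_balanced (n : ℕ) (p : Fin n → ℤ) (hsum : ∑ i, p i = 0)
    (L : List (Txn n)) (hvalid : ValidTxns L) (hsettle : Settles L p)
    (S : Finset (Fin n))
    (hcross : ∀ t ∈ L, (t.1 ∈ S ∧ t.2.1 ∈ S) ∨ (t.1 ∉ S ∧ t.2.1 ∉ S)) :
    ∑ i ∈ S, p i = 0 := by
  have key : ∀ k, p k =
      (L.map (fun t => (if t.1 = k then t.2.2 else 0) - (if t.2.1 = k then t.2.2 else 0))).sum := by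
    intro k
    rw [← hsettle k, sum_filter_map_eq L (fun t => t.1 = k),
      sum_filter_map_eq L (fun t => t.2.1 = k)]
    rw [sum_map_sub]
  calc ∑ i ∈ S, p i
      = ∑ k ∈ S, (L.map (fun t => (if t.1 = k then t.2.2 else 0)
          - (if t.2.1 = k then t.2.2 else 0))).sum := by
        exact Finset.sum_congr rfl fun k _ => key k
    _ = (L.map (fun t => ∑ k ∈ S, ((if t.1 = k then t.2.2 else 0)
          - (if t.2.1 = k then t.2.2 else 0)))).sum :=
        finset_sum_list_sum S L _
    _ = 0 := by
        apply List.sum_eq_zero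
        intro x hx
        simp only [List.mem_map] at hx
        obtain ⟨a, ha, rfl⟩ := hx
        rw [Finset.sum_sub_distrib]
        have e1 : ∑ k ∈ S, (if a.1 = k then a.2.2 else 0)
            = if a.1 ∈ S then a.2.2 else 0 := by
          simp [Finset.sum_ite_eq S a.1 (fun _ => a.2.2)]
        have e2 : ∑ k ∈ S, (if a.2.1 = k then a.2.2 else 0)
            = if a.2.1 ∈ S then a.2.2 else 0 := by
          simp [Finset.sum_ite_eq S a.2.1 (fun _ => a.2.2)]
        rw [e1, e2]
        rcases hcross a ha with ⟨h, h'⟩ | ⟨h, h'⟩ <;> simp [h, h']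
end

section
/- Let n ≥ 2 and p : Fin n → ℤ with ∑ i, p i = 0. If a list L of transactions settles p and L.length < n − 1, then there exists a subset S ⊆ Fin n with S nonempty, S ≠ Fin n (S is a proper subset), and ∑ i ∈ S, p i = 0. -/
namespace Settle

variable {m : ℕ}

def step (L : List (Txn m)) (x y : Fin m) : Prop :=
  ∃ t ∈ L, (t.1 = x ∧ t.2.1 = y) ∨ (t.1 = y ∧ t.2.1 = x)

def Rel (L : List (Txn m)) : Fin m → Fin m → Prop :=
  Relation.EqvGen (step L)

lemma Rel.refl (L : List (Txn m)) (x : Fin m) : Rel L x x := Relation.EqvGen.refl x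
lemma Rel.symm {L : List (Txn m)} {x y : Fin m} (h : Rel L x y) : Rel L y x :=
  Relation.EqvGen.symm _ _ h
lemma Rel.trans {L : List (Txn m)} {x y z : Fin m} (h : Rel L x y) (h' : Rel L y z) :
    Rel L x z := Relation.EqvGen.trans _ _ _ h h'

lemma Rel.mono {L L' : List (Txn m)} (hsub : ∀ t ∈ L, t ∈ L') {x y : Fin m}
    (h : Rel L x y) : Rel L' x y := by
  refine Relation.EqvGen.mono ?_ x y h
  rintro a b ⟨t, ht, h⟩
  exact ⟨t, hsub t ht, h⟩

lemma rel_nil {x y : Fin m} (h : Rel ([] : List (Txn m)) x y) : x = y := by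
  induction h with
  | rel a b h => exact absurd h (by rintro ⟨t, ht, -⟩; simp at ht)
  | refl => rfl
  | symm a b _ ih => exact ih.symm
  | trans a b c _ _ ih ih' => exact ih.trans ih'

/-- Key merging lemma: adding one edge `t` relates `x y` only if already related,
or both are (anciently) related to an endpoint of `t`. -/
lemma rel_cons {t : Txn m} {L : List (Txn m)} {x y : Fin m} (h : Rel (t :: L) x y) :
    Rel L x y ∨ ((Rel L x t.1 ∨ Rel L x t.2.1) ∧ (Rel L y t.1 ∨ Rel L y t.2.1)) := by
  induction h with
  | rel a b hab =>
    obtain ⟨s, hs, hends⟩ := hab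
    rcases List.mem_cons.mp hs with rfl | hsL
    · right
      rcases hends with ⟨rfl, rfl⟩ | ⟨rfl, rfl⟩
      · exact ⟨Or.inl (Rel.refl _ _), Or.inr (Rel.refl _ _)⟩
      · exact ⟨Or.inr (Rel.refl _ _), Or.inl (Rel.refl _ _)⟩
    · exact Or.inl (Relation.EqvGen.rel _ _ ⟨s, hsL, hends⟩)
  | refl a => exact Or.inl (Rel.refl _ _)
  | symm a b _ ih =>
    rcases ih with h | ⟨h1, h2⟩
    · exact Or.inl h.symm
    · exact Or.inr ⟨h2, h1⟩
  | trans a b c _ _ ih ih' =>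
    rcases ih with hab | ⟨ha, hb⟩
    · rcases ih' with hbc | ⟨hb, hc⟩
      · exact Or.inl (hab.trans hbc)
      · refine Or.inr ⟨?_, hc⟩
        rcases hb with hb | hb
        · exact Or.inl (hab.trans hb)
        · exact Or.inr (hab.trans hb)
    · rcases ih' with hbc | ⟨hb', hc⟩
      · refine Or.inr ⟨ha, ?_⟩
        rcases hb with hb | hb
        · exact Or.inl (hbc.symm.trans hb)
        · exact Or.inr (hbc.symm.trans hb)
      · exact Or.inr ⟨ha, hc⟩

noncomputable def cls (L : List (Txn m)) (x : Fin m) : Finset (Fin m) :=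
  @Finset.filter _ (fun y => Rel L x y) (Classical.decPred _) Finset.univ

lemma mem_cls {L : List (Txn m)} {x y : Fin m} : y ∈ cls L x ↔ Rel L x y := by
  simp [cls]

lemma cls_eq_of_rel {L : List (Txn m)} {x y : Fin m} (h : Rel L x y) :
    cls L x = cls L y := by
  ext z
  simp only [mem_cls]
  exact ⟨fun hz => h.symm.trans hz, fun hz => h.trans hz⟩

lemma rel_of_cls_eq {L : List (Txn m)} {x y : Fin m} (h : cls L x = cls L y) :
    Rel L x y := by
  have : y ∈ cls L x := h ▸ mem_cls.mpr (Rel.refl L y)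
  exact mem_cls.mp this

noncomputable def classes (L : List (Txn m)) : Finset (Finset (Fin m)) :=
  Finset.univ.image (cls L)

lemma card_classes_nil : (classes ([] : List (Txn m))).card = m := by
  have hinj : Function.Injective (cls ([] : List (Txn m))) := by
    intro x y h
    exact rel_nil (rel_of_cls_eq h)
  rw [classes, Finset.card_image_of_injective _ hinj, Finset.card_univ, Fintype.card_fin]

lemma card_classes_cons (t : Txn m) (L : List (Txn m)) :
    (classes L).card ≤ (classes (t :: L)).card + 1 := by
  classical
  set F : Finset (Fin m) → Finset (Fin m) :=
    fun c => @Finset.filter _ (fun y => ∃ x ∈ c, Rel (t :: L) x y) (Classical.decPred _)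
      Finset.univ with hF
  have hFc : ∀ x : Fin m, F (cls L x) = cls (t :: L) x := by
    intro x
    ext y
    simp only [hF, Finset.mem_filter, Finset.mem_univ, true_and, mem_cls]
    constructor
    · rintro ⟨x', hx', hr⟩
      exact (Rel.mono (fun s hs => List.mem_cons_of_mem t hs) hx').trans hr
    · intro hr
      exact ⟨x, Rel.refl _ _, hr⟩
  have hmem : cls L t.1 ∈ classes L := Finset.mem_image.mpr ⟨t.1, Finset.mem_univ _, rfl⟩
  have hsub : (classes L).card ≤ ((classes L).erase (cls L t.1)).card + 1 := by
    conv_lhs => rw [← Finset.insert_erase hmem]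
    exact Finset.card_insert_le _ _
  have hinj : Set.InjOn F ((classes L).erase (cls L t.1)) := by
    intro c hc d hd hcd
    obtain ⟨x, -, rfl⟩ := Finset.mem_image.mp (Finset.mem_erase.mp hc).2
    obtain ⟨y, -, rfl⟩ := Finset.mem_image.mp (Finset.mem_erase.mp hd).2
    have hx1 : ¬ Rel L x t.1 := fun h => (Finset.mem_erase.mp hc).1 (cls_eq_of_rel h)
    have hy1 : ¬ Rel L y t.1 := fun h => (Finset.mem_erase.mp hd).1 (cls_eq_of_rel h)
    rw [hFc, hFc] at hcd
    have hxy : Rel (t :: L) x y := rel_of_cls_eq hcd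
    rcases rel_cons hxy with h | ⟨hx, hy⟩
    · exact cls_eq_of_rel h
    · rcases hx with hx | hx
      · exact absurd hx hx1
      · rcases hy with hy | hy
        · exact absurd hy hy1
        · exact cls_eq_of_rel (hx.trans hy.symm)
  have himg : ((classes L).erase (cls L t.1)).image F ⊆ classes (t :: L) := by
    intro c hc
    obtain ⟨d, hd, rfl⟩ := Finset.mem_image.mp hc
    obtain ⟨x, -, rfl⟩ := Finset.mem_image.mp (Finset.mem_erase.mp hd).2
    rw [hFc]
    exact Finset.mem_image.mpr ⟨x, Finset.mem_univ x, rfl⟩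
  calc (classes L).card ≤ ((classes L).erase (cls L t.1)).card + 1 := hsub
    _ = (((classes L).erase (cls L t.1)).image F).card + 1 := by
        rw [Finset.card_image_of_injOn hinj]
    _ ≤ (classes (t :: L)).card + 1 := by
        exact Nat.add_le_add_right (Finset.card_le_card himg) 1

lemma card_classes_ge (L : List (Txn m)) : m ≤ (classes L).card + L.length := by
  induction L with
  | nil => simp [card_classes_nil]
  | cons t L ih =>
    calc m ≤ (classes L).card + L.length := ih
      _ ≤ ((classes (t :: L)).card + 1) + L.length :=
          Nat.add_le_add_right (card_classes_cons t L) _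
      _ = (classes (t :: L)).card + (t :: L).length := by simp; ring

lemma sum_filter_swap (L : List (Txn m)) (f : Txn m → Fin m) (S : Finset (Fin m)) :
    ∑ k ∈ S, ((L.filter (fun t => f t = k)).map (fun t => t.2.2)).sum
      = ((L.filter (fun t => f t ∈ S)).map (fun t => t.2.2)).sum := by
  induction L with
  | nil => simp
  | cons t L ih =>
    have hstep : ∀ k : Fin m,
        (((t :: L).filter (fun t' => f t' = k)).map (fun t => t.2.2)).sum
          = (if f t = k then t.2.2 else 0)
            + ((L.filter (fun t' => f t' = k)).map (fun t => t.2.2)).sum := by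
      intro k
      by_cases h : f t = k <;> simp [List.filter_cons, h]
    rw [Finset.sum_congr rfl (fun k _ => hstep k), Finset.sum_add_distrib,
      Finset.sum_ite_eq, ih]
    by_cases h : f t ∈ S <;> simp [List.filter_cons, h]

end Settle

/-- fewer than `n - 1` transactions force a nonempty proper subset of
participants whose balances sum to zero. -/
theorem few_transactions_gives_balanced_subset (n : ℕ) (hn : 2 ≤ n)
    (p : Fin n → ℤ) (hsum : ∑ i, p i = 0)
    (L : List (Txn n)) (hvalid : ValidTxns L) (hsettle : Settles L p)
    (hlen : L.length < n - 1) :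
    ∃ S : Finset (Fin n), S.Nonempty ∧ S ≠ Finset.univ ∧ ∑ i ∈ S, p i = 0 := by
  classical
  have h2 : 2 ≤ (Settle.classes L).card := by
    have := Settle.card_classes_ge L
    omega
  obtain ⟨a, ha, b, hb, hab⟩ := Finset.one_lt_card.mp h2
  obtain ⟨x, -, rfl⟩ := Finset.mem_image.mp ha
  obtain ⟨y, -, rfl⟩ := Finset.mem_image.mp hb
  refine ⟨Settle.cls L x, ⟨x, Settle.mem_cls.mpr (Settle.Rel.refl _ _)⟩, ?_, ?_⟩
  · intro h
    apply hab
    have hy : y ∈ Settle.cls L x := h ▸ Finset.mem_univ y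
    exact Settle.cls_eq_of_rel (Settle.mem_cls.mp hy)
  · set S := Settle.cls L x with hS
    have hclosed : ∀ t ∈ L, (t.1 ∈ S ↔ t.2.1 ∈ S) := by
      intro t ht
      have hrel : Settle.Rel L t.1 t.2.1 :=
        Relation.EqvGen.rel _ _ ⟨t, ht, Or.inl ⟨rfl, rfl⟩⟩
      simp only [hS, Settle.mem_cls]
      exact ⟨fun h => h.trans hrel, fun h => h.trans hrel.symm⟩
    have hfil : L.filter (fun t => t.1 ∈ S) = L.filter (fun t => t.2.1 ∈ S) :=
      List.filter_congr (fun t ht => decide_eq_decide.mpr (hclosed t ht))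
    calc ∑ i ∈ S, p i
        = ∑ k ∈ S, (((L.filter (fun t => t.1 = k)).map (fun t => t.2.2)).sum
            - ((L.filter (fun t => t.2.1 = k)).map (fun t => t.2.2)).sum) :=
          Finset.sum_congr rfl (fun k _ => (hsettle k).symm)
      _ = (∑ k ∈ S, ((L.filter (fun t => t.1 = k)).map (fun t => t.2.2)).sum)
            - ∑ k ∈ S, ((L.filter (fun t => t.2.1 = k)).map (fun t => t.2.2)).sum :=
          Finset.sum_sub_distrib _ _
      _ = 0 := by
          rw [Settle.sum_filter_swap L (fun t => t.1) S,
            Settle.sum_filter_swap L (fun t => t.2.1) S, hfil, sub_self]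
end

section
/- Let n ≥ 2 and p : Fin n → ℤ with ∑ i, p i = 0. If there exists a subset S ⊆ Fin n with S nonempty, S ≠ Fin n, and ∑ i ∈ S, p i = 0, then there exists a list L of transactions that settles p with L.length ≤ n − 2. -/
def net {m : ℕ} (L : List (Txn m)) (k : Fin m) : ℤ :=
  ((L.filter (fun t => t.1 = k)).map (fun t => t.2.2)).sum
    - ((L.filter (fun t => t.2.1 = k)).map (fun t => t.2.2)).sum

lemma net_cons {m : ℕ} (t : Txn m) (L : List (Txn m)) (k : Fin m) :
    net (t :: L) k = (if t.1 = k then t.2.2 else 0) - (if t.2.1 = k then t.2.2 else 0)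
      + net L k := by
  simp only [net, List.filter_cons]
  split <;> split <;> simp_all <;> ring

lemma net_append {m : ℕ} (L1 L2 : List (Txn m)) (k : Fin m) :
    net (L1 ++ L2) k = net L1 k + net L2 k := by
  simp only [net, List.filter_append, List.map_append, List.sum_append]
  ring

lemma aux_s4 (m : ℕ) (N : ℕ) : ∀ (S : Finset (Fin m)) (p : Fin m → ℤ), S.card ≤ N →
    ∑ i ∈ S, p i = 0 →
    ∃ L : List (Txn m), ValidTxns L ∧
      (∀ k, net L k = if k ∈ S then p k else 0) ∧ L.length ≤ S.card - 1 := by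
  induction N with
  | zero =>
    intro S p hcard hsum
    refine ⟨[], by intro t ht; simp at ht, ?_, by simp⟩
    intro k
    have : S = ∅ := Finset.card_eq_zero.mp (Nat.le_zero.mp hcard)
    subst this
    simp [net]
  | succ N ih =>
    intro S p hcard hsum
    rcases S.eq_empty_or_nonempty with rfl | ⟨x, hx⟩
    · exact ⟨[], by intro t ht; simp at ht, by intro k; simp [net], by simp⟩
    rcases (S.erase x).eq_empty_or_nonempty with he | ⟨y, hy⟩
    · -- S = {x}, so p x = 0
      have hSx : S = {x} := by
        apply Finset.eq_singleton_iff_unique_mem.mpr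
        refine ⟨hx, fun z hz => ?_⟩
        by_contra hne
        exact (Finset.eq_empty_iff_forall_notMem.mp he z) (Finset.mem_erase.mpr ⟨hne, hz⟩)
      have hpx : p x = 0 := by simpa [hSx] using hsum
      refine ⟨[], by intro t ht; simp at ht, ?_, by simp⟩
      intro k
      by_cases hk : k ∈ S
      · have : k = x := by simpa [hSx] using hk
        simp [net, hk, this, hpx]
      · simp [net, hk]
    · have hyx : y ≠ x := (Finset.mem_erase.mp hy).1
      have hyS : y ∈ S := (Finset.mem_erase.mp hy).2
      set p' : Fin m → ℤ := Function.update p y (p y + p x) with hp'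
      have hp'x : p' x = p x := Function.update_of_ne (Ne.symm hyx) _ _
      have hp'other : ∀ z, z ≠ y → p' z = p z := fun z hz => Function.update_of_ne hz _ _
      have hp'y : p' y = p y + p x := Function.update_self _ _ _
      have hsum' : ∑ i ∈ S.erase x, p' i = 0 := by
        have e1 : p' y + ∑ i ∈ (S.erase x).erase y, p' i = ∑ i ∈ S.erase x, p' i :=
          Finset.add_sum_erase _ p' hy
        have e2 : p y + ∑ i ∈ (S.erase x).erase y, p i = ∑ i ∈ S.erase x, p i :=
          Finset.add_sum_erase _ p hy
        have e3 : ∑ i ∈ (S.erase x).erase y, p' i = ∑ i ∈ (S.erase x).erase y, p i :=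
          Finset.sum_congr rfl (fun z hz => hp'other z (Finset.mem_erase.mp hz).1)
        have e4 : p x + ∑ i ∈ S.erase x, p i = ∑ i ∈ S, p i := Finset.add_sum_erase _ p hx
        rw [hp'y] at e1
        linarith
      have hcard2 : 2 ≤ S.card := by
        have := Finset.card_erase_of_mem hx
        have h1 : 1 ≤ (S.erase x).card := Finset.card_pos.mpr ⟨y, hy⟩
        omega
      have hcard' : (S.erase x).card ≤ N := by
        rw [Finset.card_erase_of_mem hx]; omega
      obtain ⟨L', hv', hnet', hlen'⟩ := ih (S.erase x) p' hcard' hsum'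
      have hcardE : (S.erase x).card = S.card - 1 := Finset.card_erase_of_mem hx
      rcases lt_trichotomy (p x) 0 with hlt | heq | hgt
      · refine ⟨(y, x, -(p x)) :: L', ?_, ?_, ?_⟩
        · intro t ht
          rcases List.mem_cons.mp ht with rfl | ht'
          · refine ⟨hyx, ?_⟩
            show (0:ℤ) < -p x
            linarith
          · exact hv' t ht'
        · intro k
          rw [net_cons, hnet' k]
          by_cases hkx : k = x
          · subst hkx
            simp [Ne.symm hyx, hx, Finset.mem_erase]
            omega
          · by_cases hky : k = y
            · subst hky
              simp [hyx, hy, hyS, hp'y]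
              omega
            · have hkE : k ∈ S.erase x ↔ k ∈ S := by
                simp [Finset.mem_erase, hkx]
              have hpk : p' k = p k := hp'other k hky
              have hy' : ¬ ((y, x, -(p x)).1 = k) := fun h => hky h.symm
              have hx' : ¬ ((y, x, -(p x)).2.1 = k) := fun h => hkx h.symm
              rw [if_neg hy', if_neg hx']
              by_cases hkS : k ∈ S
              · simp [hkE.mpr hkS, hkS, hpk]
              · simp [hkS, (fun h => hkS (hkE.mp h) : k ∉ S.erase x)]
        · simp only [List.length_cons]; omega
      · -- p x = 0: note then p' = update p y (p y), need net on S
        refine ⟨L', hv', ?_, by omega⟩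
        intro k
        rw [hnet' k]
        by_cases hkx : k = x
        · subst hkx
          simp [heq, Finset.mem_erase, hx]
        · have hkE : k ∈ S.erase x ↔ k ∈ S := by simp [Finset.mem_erase, hkx]
          by_cases hky : k = y
          · subst hky
            simp [hkE.mpr hyS, hyS, hp'y, heq]
          · by_cases hkS : k ∈ S
            · simp [hkE.mpr hkS, hkS, hp'other k hky]
            · simp [hkS, (fun h => hkS (hkE.mp h) : k ∉ S.erase x)]
      · refine ⟨(x, y, p x) :: L', ?_, ?_, ?_⟩
        · intro t ht
          rcases List.mem_cons.mp ht with rfl | ht'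
          · exact ⟨Ne.symm hyx, hgt⟩
          · exact hv' t ht'
        · intro k
          rw [net_cons, hnet' k]
          by_cases hkx : k = x
          · subst hkx
            simp [Ne.symm hyx, hx, Finset.mem_erase, hyx]
            try omega
          · by_cases hky : k = y
            · subst hky
              simp [Ne.symm hyx, hy, hyS, hp'y]
              try omega
            · have hkE : k ∈ S.erase x ↔ k ∈ S := by simp [Finset.mem_erase, hkx]
              rw [if_neg (by exact fun h => hkx h.symm), if_neg (by exact fun h => hky h.symm)]
              by_cases hkS : k ∈ S
              · simp [hkE.mpr hkS, hkS, hp'other k hky]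
              · simp [hkS, (fun h => hkS (hkE.mp h) : k ∉ S.erase x)]
        · simp only [List.length_cons]; omega

/-- a nonempty proper balanced subset allows settling with at most
`n - 2` transactions (settle `S` and its complement independently). -/
theorem balanced_subset_gives_few_transactions (n : ℕ) (hn : 2 ≤ n)
    (p : Fin n → ℤ) (hsum : ∑ i, p i = 0)
    (hS : ∃ S : Finset (Fin n), S.Nonempty ∧ S ≠ Finset.univ ∧ ∑ i ∈ S, p i = 0) :
    ∃ L : List (Txn n), ValidTxns L ∧ Settles L p ∧ L.length ≤ n - 2 := by
  obtain ⟨S, hne, hproper, hS0⟩ := hS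
  have hcompl : ∑ i ∈ Sᶜ, p i = 0 := by
    have := Finset.sum_add_sum_compl S p
    rw [hS0, hsum] at this
    linarith
  obtain ⟨L1, hv1, hnet1, hlen1⟩ := aux_s4 n S.card S p le_rfl hS0
  obtain ⟨L2, hv2, hnet2, hlen2⟩ := aux_s4 n Sᶜ.card Sᶜ p le_rfl hcompl
  refine ⟨L1 ++ L2, ?_, ?_, ?_⟩
  · intro t ht
    rcases List.mem_append.mp ht with h | h
    exacts [hv1 t h, hv2 t h]
  · intro k
    have := net_append L1 L2 k
    have heq : net (L1 ++ L2) k = p k := by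
      rw [this, hnet1 k, hnet2 k]
      by_cases hk : k ∈ S <;> simp [hk]
    simpa [net] using heq
  · have h1 : 1 ≤ S.card := Finset.card_pos.mpr hne
    have h2 : 1 ≤ Sᶜ.card := by
      rw [Finset.card_compl, Fintype.card_fin]
      have : S.card < n := by
        have := Finset.card_lt_card (Finset.ssubset_univ_iff.mpr hproper)
        simpa using this
      omega
    have h3 : S.card + Sᶜ.card = n := by
      have : S.card ≤ n := by simpa using S.card_le_univ
      rw [Finset.card_compl, Fintype.card_fin]
      omega
    rw [List.length_append]; omega
end

section
/- Let n ≥ 2 and p : Fin n → ℤ with ∑ i, p i = 0. Then there exists a list L of transactions that settles p with L.length < n − 1 if and only if there exists a subset S ⊆ Fin n with S nonempty, S ≠ Fin n, and ∑ i ∈ S, p i = 0. -/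
open Finset Relation

lemma settles_append {n : ℕ} {L1 L2 : List (Txn n)} {q1 q2 : Fin n → ℤ}
    (h1 : Settles L1 q1) (h2 : Settles L2 q2) :
    Settles (L1 ++ L2) (fun k => q1 k + q2 k) := by
  intro k
  have a1 := h1 k
  have a2 := h2 k
  simp only [List.filter_append, List.map_append, List.sum_append]
  linarith

lemma settles_cons {n : ℕ} {L : List (Txn n)} {q : Fin n → ℤ} (h : Settles L q)
    (i j : Fin n) (a : ℤ) :
    Settles ((i, j, a) :: L)
      (fun k => q k + (if i = k then a else 0) - (if j = k then a else 0)) := by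
  intro k
  have hk := h k
  simp only [List.filter_cons]
  by_cases hi : i = k <;> by_cases hj : j = k <;>
    simp [hi, hj] <;> linarith

lemma settles_congr {n : ℕ} {L : List (Txn n)} {q q' : Fin n → ℤ}
    (h : Settles L q) (he : ∀ k, q k = q' k) : Settles L q' := by
  intro k; rw [← he k]; exact h k

lemma settle_on {n : ℕ} (S : Finset (Fin n)) :
    ∀ q : Fin n → ℤ, (∀ i, i ∉ S → q i = 0) → ∑ i ∈ S, q i = 0 →
    ∃ L : List (Txn n), ValidTxns L ∧ Settles L q ∧ L.length ≤ S.card - 1 := by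
  induction S using Finset.strongInduction with
  | _ S ih =>
    intro q hq hsum
    rcases S.eq_empty_or_nonempty with rfl | ⟨i, hi⟩
    · refine ⟨[], by simp [ValidTxns], fun k => by simpa using (hq k (by simp)).symm, by simp⟩
    by_cases hqi : q i = 0
    · obtain ⟨L, h1, h2, h3⟩ := ih (S.erase i) (Finset.erase_ssubset hi) q
        (fun j hj => by
          rcases eq_or_ne j i with rfl | hne
          · exact hqi
          · exact hq j (fun hS => hj (Finset.mem_erase.mpr ⟨hne, hS⟩)))
        (by rwa [Finset.sum_erase _ hqi])
      exact ⟨L, h1, h2, by have := Finset.card_erase_of_mem hi; omega⟩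
    · have h2card : ∃ j ∈ S, j ≠ i := by
        by_contra h
        push_neg at h
        have hS : S = {i} := by
          apply Finset.eq_singleton_iff_unique_mem.mpr
          exact ⟨hi, fun x hx => h x hx⟩
        rw [hS, Finset.sum_singleton] at hsum
        exact hqi hsum
      obtain ⟨j, hj, hji⟩ := h2card
      set q' : Fin n → ℤ := fun k => if k = i then 0 else if k = j then q j + q i else q k with hq'
      have hji' : (i:Fin n) ≠ j := hji.symm
      have hmem : j ∈ S.erase i := Finset.mem_erase.mpr ⟨hji, hj⟩
      obtain ⟨L, h1, h2, h3⟩ := ih (S.erase i) (Finset.erase_ssubset hi) q'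
        (fun k hk => by
          rcases eq_or_ne k i with rfl | hki
          · simp [hq']
          · have hkS : k ∉ S := fun hS => hk (Finset.mem_erase.mpr ⟨hki, hS⟩)
            have hkj : k ≠ j := fun h => hkS (h ▸ hj)
            simp [hq', hki, hkj, hq k hkS])
        (by
          have e1 : ∑ k ∈ (S.erase i).erase j, q' k + q' j = ∑ k ∈ S.erase i, q' k :=
            Finset.sum_erase_add _ _ hmem
          have e2 : ∑ k ∈ (S.erase i).erase j, q k + q j = ∑ k ∈ S.erase i, q k :=
            Finset.sum_erase_add _ _ hmem
          have e3 : ∑ k ∈ S.erase i, q k + q i = ∑ k ∈ S, q k :=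
            Finset.sum_erase_add _ _ hi
          have e4 : ∑ k ∈ (S.erase i).erase j, q' k = ∑ k ∈ (S.erase i).erase j, q k := by
            apply Finset.sum_congr rfl
            intro k hk
            have hki : k ≠ i := (Finset.mem_erase.mp (Finset.mem_of_mem_erase hk)).1
            have hkj : k ≠ j := (Finset.mem_erase.mp hk).1
            simp [hq', hki, hkj]
          have e5 : q' j = q j + q i := by simp [hq', hji]
          omega)
      have hcard := Finset.card_erase_of_mem hi
      have hc2 : 2 ≤ S.card := Finset.one_lt_card.mpr ⟨j, hj, i, hi, hji⟩
      rcases lt_trichotomy (q i) 0 with hlt | h0 | hgt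
      · refine ⟨(j, i, -q i) :: L, ?_, ?_, by simp only [List.length_cons]; omega⟩
        · intro t ht
          rcases List.mem_cons.mp ht with rfl | ht
          · exact ⟨hji, neg_pos.mpr hlt⟩
          · exact h1 t ht
        · refine settles_congr (settles_cons h2 j i (-q i)) fun k => ?_
          rcases eq_or_ne k i with rfl | hki
          · simp [hq', hji, hji']
          · rcases eq_or_ne k j with rfl | hkj
            · simp [hq', hji, hki.symm]
            · simp [hq', hki, hkj, hki.symm, hkj.symm]
      · exact absurd h0 hqi
      · refine ⟨(i, j, q i) :: L, ?_, ?_, by simp only [List.length_cons]; omega⟩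
        · intro t ht
          rcases List.mem_cons.mp ht with rfl | ht
          · exact ⟨hji', hgt⟩
          · exact h1 t ht
        · refine settles_congr (settles_cons h2 i j (q i)) fun k => ?_
          rcases eq_or_ne k i with rfl | hki
          · simp [hq', hji, hji']
          · rcases eq_or_ne k j with rfl | hkj
            · simp [hq', hji, hki.symm]
            · simp [hq', hki, hkj, hki.symm, hkj.symm]

variable {n : ℕ}

open Classical in
noncomputable def cls (r : Fin n → Fin n → Prop) (x : Fin n) : Finset (Fin n) :=
  Finset.univ.filter (fun y => EqvGen r x y)

lemma mem_cls {r : Fin n → Fin n → Prop} {x y : Fin n} :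
    y ∈ cls r x ↔ EqvGen r x y := by
  classical
  simp [cls]

lemma cls_eq_of {r : Fin n → Fin n → Prop} {x y : Fin n} (h : EqvGen r x y) :
    cls r x = cls r y := by
  ext z
  simp only [mem_cls]
  exact ⟨fun h2 => (h.symm).trans _ _ _ h2, fun h2 => h.trans _ _ _ h2⟩

lemma eqv_of_cls_eq {r : Fin n → Fin n → Prop} {x y : Fin n} (h : cls r x = cls r y) :
    EqvGen r x y := by
  have : y ∈ cls r x := h ▸ (mem_cls.mpr (EqvGen.refl y))
  exact mem_cls.mp this

noncomputable def nclasses (r : Fin n → Fin n → Prop) : ℕ :=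
  (Finset.univ.image (cls r)).card

lemma eqvGen_bot {x y : Fin n} (h : EqvGen (fun _ _ => False) x y) : x = y := by
  induction h with
  | rel _ _ h => exact h.elim
  | refl => rfl
  | symm _ _ _ ih => exact ih.symm
  | trans _ _ _ _ _ ih1 ih2 => exact ih1.trans ih2

lemma nclasses_bot : nclasses (fun _ _ => False : Fin n → Fin n → Prop) = n := by
  have hcls : cls (fun _ _ => False : Fin n → Fin n → Prop) = fun x => {x} := by
    funext x
    ext y
    simp only [mem_cls, Finset.mem_singleton]
    exact ⟨fun h => (eqvGen_bot h).symm, by rintro rfl; exact EqvGen.refl _⟩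
  unfold nclasses
  rw [hcls]
  rw [Finset.card_image_of_injective _ fun a b h => Finset.singleton_injective h]
  simp

/-- adding one pair to a relation: characterize the new EqvGen -/
lemma eqvGen_insert {r : Fin n → Fin n → Prop} {a b x y : Fin n}
    (h : EqvGen (fun u v => r u v ∨ (u = a ∧ v = b)) x y) :
    EqvGen r x y ∨
      ((EqvGen r x a ∨ EqvGen r x b) ∧ (EqvGen r y a ∨ EqvGen r y b)) := by
  induction h with
  | rel u v h =>
    rcases h with h | ⟨rfl, rfl⟩
    · exact Or.inl (EqvGen.rel _ _ h)
    · exact Or.inr ⟨Or.inl (EqvGen.refl _), Or.inr (EqvGen.refl _)⟩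
  | refl u => exact Or.inl (EqvGen.refl u)
  | symm u v _ ih =>
    rcases ih with h | ⟨h1, h2⟩
    · exact Or.inl (h.symm _ _)
    · exact Or.inr ⟨h2, h1⟩
  | trans u v w huv hvw ih1 ih2 =>
    rcases ih1 with h1 | ⟨h1a, h1b⟩
    · rcases ih2 with h2 | ⟨h2a, h2b⟩
      · exact Or.inl (h1.trans _ _ _ h2)
      · exact Or.inr ⟨Or.imp (fun hv => h1.trans _ _ _ hv) (fun hv => h1.trans _ _ _ hv) h2a, h2b⟩
    · rcases ih2 with h2 | ⟨h2a, h2b⟩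
      · exact Or.inr ⟨h1a, Or.imp (fun hv => (h2.symm _ _).trans _ _ _ hv)
          (fun hv => (h2.symm _ _).trans _ _ _ hv) h1b⟩
      · exact Or.inr ⟨h1a, h2b⟩

lemma nclasses_insert_le {r : Fin n → Fin n → Prop} {a b : Fin n} :
    nclasses r ≤ nclasses (fun u v => r u v ∨ (u = a ∧ v = b)) + 1 := by
  classical
  set r' : Fin n → Fin n → Prop := fun u v => r u v ∨ (u = a ∧ v = b) with hr'
  have hsub : ∀ x y, EqvGen r x y → EqvGen r' x y := by
    intro x y h
    induction h with
    | rel u v h => exact EqvGen.rel _ _ (Or.inl h)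
    | refl u => exact EqvGen.refl u
    | symm u v _ ih => exact ih.symm _ _
    | trans u v w _ _ ih1 ih2 => exact ih1.trans _ _ _ ih2
  set f : Finset (Fin n) → Finset (Fin n) :=
    fun s => Finset.univ.filter (fun y => ∃ x ∈ s, EqvGen r' x y) with hf
  have hfc : ∀ x : Fin n, f (cls r x) = cls r' x := by
    intro x
    ext y
    simp only [hf, Finset.mem_filter, Finset.mem_univ, true_and, mem_cls]
    constructor
    · rintro ⟨z, hz, hzy⟩
      exact (hsub _ _ hz).trans _ _ _ hzy
    · intro h
      exact ⟨x, EqvGen.refl x, h⟩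
  have key : ((Finset.univ.image (cls r)).erase (cls r b)).card ≤
      (Finset.univ.image (cls r')).card := by
    apply Finset.card_le_card_of_injOn f
    · intro s hs
      obtain ⟨x, -, rfl⟩ := Finset.mem_image.mp (Finset.mem_of_mem_erase hs)
      rw [hfc]
      exact Finset.mem_image.mpr ⟨x, Finset.mem_univ x, rfl⟩
    · intro s1 hs1 s2 hs2 hf12
      obtain ⟨hb1, hs1⟩ := Finset.mem_erase.mp hs1
      obtain ⟨hb2, hs2⟩ := Finset.mem_erase.mp hs2
      obtain ⟨x, -, rfl⟩ := Finset.mem_image.mp hs1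
      obtain ⟨y, -, rfl⟩ := Finset.mem_image.mp hs2
      rw [hfc, hfc] at hf12
      have hxy : EqvGen r' x y := eqv_of_cls_eq hf12
      rcases eqvGen_insert hxy with h | ⟨h1, h2⟩
      · exact cls_eq_of h
      · have hxa : EqvGen r x a := by
          rcases h1 with h1 | h1
          · exact h1
          · exact absurd (cls_eq_of h1) hb1
        have hya : EqvGen r y a := by
          rcases h2 with h2 | h2
          · exact h2
          · exact absurd (cls_eq_of h2) hb2
        exact cls_eq_of (hxa.trans _ _ _ (hya.symm _ _))
  have hbmem : cls r b ∈ Finset.univ.image (cls r) :=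
    Finset.mem_image.mpr ⟨b, Finset.mem_univ b, rfl⟩
  have := Finset.card_erase_of_mem hbmem
  unfold nclasses
  omega

def relOf (L : List (Txn n)) : Fin n → Fin n → Prop :=
  fun x y => ∃ t ∈ L, t.1 = x ∧ t.2.1 = y

lemma relOf_nil : relOf ([] : List (Txn n)) = fun _ _ => False := by
  funext x y; simp [relOf]

lemma relOf_cons (t : Txn n) (L : List (Txn n)) :
    relOf (t :: L) = fun u v => relOf L u v ∨ (u = t.1 ∧ v = t.2.1) := by
  funext x y
  apply propext
  simp only [relOf, List.mem_cons]
  constructor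
  · rintro ⟨s, hs | hs, h1, h2⟩
    · exact Or.inr ⟨by rw [← h1, hs], by rw [← h2, hs]⟩
    · exact Or.inl ⟨s, hs, h1, h2⟩
  · rintro (⟨s, hs, h1, h2⟩ | ⟨rfl, rfl⟩)
    · exact ⟨s, Or.inr hs, h1, h2⟩
    · exact ⟨t, Or.inl rfl, rfl, rfl⟩

lemma sum_settled_closed (S : Finset (Fin n)) :
    ∀ L : List (Txn n), (∀ t ∈ L, (t.1 ∈ S ↔ t.2.1 ∈ S)) →
    ∑ k ∈ S, (((L.filter (fun t => t.1 = k)).map (fun t => t.2.2)).sum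
      - ((L.filter (fun t => t.2.1 = k)).map (fun t => t.2.2)).sum) = 0 := by
  intro L
  induction L with
  | nil => simp
  | cons t L ih =>
    intro hcl
    have hterm : ∀ k : Fin n,
        ((((t :: L).filter (fun s => s.1 = k)).map (fun s => s.2.2)).sum
          - (((t :: L).filter (fun s => s.2.1 = k)).map (fun s => s.2.2)).sum)
        = (((L.filter (fun s => s.1 = k)).map (fun s => s.2.2)).sum
          - ((L.filter (fun s => s.2.1 = k)).map (fun s => s.2.2)).sum)
          + ((if t.1 = k then t.2.2 else 0) - (if t.2.1 = k then t.2.2 else 0)) := by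
      intro k
      simp only [List.filter_cons]
      by_cases h1 : t.1 = k <;> by_cases h2 : t.2.1 = k <;> simp [h1, h2] <;> ring
    rw [Finset.sum_congr rfl (fun k _ => hterm k), Finset.sum_add_distrib,
      ih (fun s hs => hcl s (List.mem_cons_of_mem t hs)), Finset.sum_sub_distrib]
    have e1 : ∑ k ∈ S, (if t.1 = k then t.2.2 else 0) = if t.1 ∈ S then t.2.2 else 0 :=
      Finset.sum_ite_eq S t.1 (fun _ => t.2.2)
    have e2 : ∑ k ∈ S, (if t.2.1 = k then t.2.2 else 0) = if t.2.1 ∈ S then t.2.2 else 0 :=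
      Finset.sum_ite_eq S t.2.1 (fun _ => t.2.2)
    rw [e1, e2]
    have := hcl t (List.mem_cons_self (a := t) (l := L))
    by_cases h : t.1 ∈ S
    · simp [h, this.mp h]
    · have h2 : t.2.1 ∉ S := fun hh => h (this.mpr hh)
      simp [h, h2]

lemma nclasses_relOf_bound (L : List (Txn n)) :
    n ≤ nclasses (relOf L) + L.length := by
  induction L with
  | nil => rw [relOf_nil, nclasses_bot]; simp
  | cons t L ih =>
    have h := nclasses_insert_le (r := relOf L) (a := t.1) (b := t.2.1)
    rw [← relOf_cons] at h
    simp only [List.length_cons]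
    omega

/-- characterization at the core of NP-completeness of SEP: `p` can be
settled with strictly fewer than `n - 1` transactions iff there is a nonempty proper
subset of participants whose balances sum to zero. -/
theorem few_transactions_iff_balanced_subset (n : ℕ) (hn : 2 ≤ n)
    (p : Fin n → ℤ) (hsum : ∑ i, p i = 0) :
    (∃ L : List (Txn n), ValidTxns L ∧ Settles L p ∧ L.length < n - 1) ↔
    (∃ S : Finset (Fin n), S.Nonempty ∧ S ≠ Finset.univ ∧ ∑ i ∈ S, p i = 0) := by
  constructor
  · rintro ⟨L, hv, hset, hlen⟩
    set r := relOf L with hr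
    have hb := nclasses_relOf_bound L
    have h2 : 2 ≤ nclasses r := by rw [hr]; omega
    obtain ⟨s1, hs1, s2, hs2, hne⟩ := Finset.one_lt_card.mp h2
    obtain ⟨x, -, rfl⟩ := Finset.mem_image.mp hs1
    obtain ⟨y, -, rfl⟩ := Finset.mem_image.mp hs2
    refine ⟨cls r x, ⟨x, mem_cls.mpr (EqvGen.refl x)⟩, ?_, ?_⟩
    · intro hU
      apply hne
      have : y ∈ cls r x := hU ▸ Finset.mem_univ y
      exact (cls_eq_of (mem_cls.mp this)).symm ▸ rfl
    · have hclosed : ∀ t ∈ L, (t.1 ∈ cls r x ↔ t.2.1 ∈ cls r x) := by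
        intro t ht
        have hrel : EqvGen r t.1 t.2.1 := EqvGen.rel _ _ ⟨t, ht, rfl, rfl⟩
        simp only [mem_cls]
        exact ⟨fun h => h.trans _ _ _ hrel, fun h => h.trans _ _ _ (hrel.symm _ _)⟩
      have := sum_settled_closed (cls r x) L hclosed
      rw [Finset.sum_congr rfl (fun k _ => hset k)] at this
      exact this
  · rintro ⟨S, hne, hneq, hzero⟩
    set qS : Fin n → ℤ := fun k => if k ∈ S then p k else 0 with hqS
    set qT : Fin n → ℤ := fun k => if k ∈ S then 0 else p k with hqT
    obtain ⟨L1, hv1, hs1, hl1⟩ := settle_on S qS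
      (fun i hi => by simp [hqS, hi])
      (by
        have he : ∑ k ∈ S, qS k = ∑ k ∈ S, p k :=
          Finset.sum_congr rfl (fun k hk => by simp [hqS, hk])
        rw [he]; exact hzero)
    obtain ⟨L2, hv2, hs2, hl2⟩ := settle_on Sᶜ qT
      (fun i hi => by simp only [Finset.mem_compl, not_not] at hi; simp [hqT, hi])
      (by
        have he : ∑ k ∈ Sᶜ, qT k = ∑ k ∈ Sᶜ, p k :=
          Finset.sum_congr rfl (fun k hk => by
            simp only [Finset.mem_compl] at hk; simp [hqT, hk])
        have h2 := Finset.sum_add_sum_compl S p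
        rw [hsum, hzero] at h2
        rw [he]
        linarith)
    refine ⟨L1 ++ L2, ?_, ?_, ?_⟩
    · intro t ht
      rcases List.mem_append.mp ht with h | h
      · exact hv1 t h
      · exact hv2 t h
    · refine settles_congr (settles_append hs1 hs2) fun k => ?_
      by_cases hk : k ∈ S <;> simp [hqS, hqT, hk]
    · have hc1 : 1 ≤ S.card := Finset.card_pos.mpr hne
      have hcc : Sᶜ.card = n - S.card := by
        rw [Finset.card_compl]; simp
      have hclt : S.card < n := by
        have := Finset.card_lt_card (Finset.ssubset_univ_iff.mpr hneq)
        simpa using this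
      rw [List.length_append]
      omega
end

section
/- Let n ≥ 1, let k : Fin n → ℤ, and let s = ∑ i, k i. Define the extended balance vector k' : Fin (n + 1) → ℤ by k' i = k i for i < n and k' n = −s (so that ∑ i, k' i = 0). Then the following are equivalent: (1) there exists a nonempty subset S ⊆ Fin n with ∑ i ∈ S, k i = 0; (2) s = 0, or there exists a list L of transactions on Fin (n + 1) that settles k' with L.length < n. -/
/-- Net amount sent minus received by participant `k`. -/
def netAmt {m : ℕ} (L : List (Txn m)) (k : Fin m) : ℤ :=
  ((L.filter (fun t => t.1 = k)).map (fun t => t.2.2)).sum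
      - ((L.filter (fun t => t.2.1 = k)).map (fun t => t.2.2)).sum

lemma settles_iff {m : ℕ} (L : List (Txn m)) (p : Fin m → ℤ) :
    Settles L p ↔ ∀ j, netAmt L j = p j := Iff.rfl

lemma netAmt_nil {m : ℕ} (j : Fin m) : netAmt [] j = 0 := by simp [netAmt]

lemma netAmt_cons {m : ℕ} (t : Txn m) (L : List (Txn m)) (j : Fin m) :
    netAmt (t :: L) j =
      (if t.1 = j then t.2.2 else 0) - (if t.2.1 = j then t.2.2 else 0) + netAmt L j := by
  unfold netAmt
  rw [List.filter_cons, List.filter_cons]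
  by_cases h1 : t.1 = j <;> by_cases h2 : t.2.1 = j <;> simp [h1, h2] <;> ring

lemma netAmt_append {m : ℕ} (L₁ L₂ : List (Txn m)) (j : Fin m) :
    netAmt (L₁ ++ L₂) j = netAmt L₁ j + netAmt L₂ j := by
  unfold netAmt
  rw [List.filter_append, List.filter_append, List.map_append, List.map_append,
    List.sum_append, List.sum_append]
  ring

lemma net_sum_zero {m : ℕ} (L : List (Txn m)) (D : Finset (Fin m))
    (hcl : ∀ t ∈ L, (t.1 ∈ D ↔ t.2.1 ∈ D)) : ∑ j ∈ D, netAmt L j = 0 := by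
  induction L with
  | nil => simp [netAmt_nil]
  | cons t L ihl =>
    have ih := ihl (fun u hu => hcl u (List.mem_cons_of_mem t hu))
    have hct := hcl t List.mem_cons_self
    simp only [netAmt_cons, Finset.sum_add_distrib, Finset.sum_sub_distrib, ih, add_zero]
    rw [Finset.sum_ite_eq D t.1 (fun _ => t.2.2), Finset.sum_ite_eq D t.2.1 (fun _ => t.2.2)]
    by_cases h : t.1 ∈ D
    · rw [if_pos h, if_pos (hct.mp h), sub_self]
    · rw [if_neg h, if_neg (fun hc => h (hct.mpr hc)), sub_self]

lemma settle_aux {m : ℕ} : ∀ (N : ℕ) (S : Finset (Fin m)) (p : Fin m → ℤ),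
    S.card ≤ N → ∑ i ∈ S, p i = 0 →
    ∃ L : List (Txn m), ValidTxns L ∧ L.length + 1 ≤ max S.card 1 ∧
      ∀ j, netAmt L j = if j ∈ S then p j else 0 := by
  intro N
  induction N with
  | zero =>
    intro S p hcard _
    have hS : S = ∅ := Finset.card_eq_zero.mp (Nat.le_zero.mp hcard)
    subst hS
    exact ⟨[], fun t ht => absurd ht List.not_mem_nil, by simp,
      fun j => by simp [netAmt_nil]⟩
  | succ N ih =>
    intro S p hcard hsum
    rcases S.eq_empty_or_nonempty with hS | hS
    · subst hS
      exact ⟨[], fun t ht => absurd ht List.not_mem_nil, by simp,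
        fun j => by simp [netAmt_nil]⟩
    obtain ⟨i, hi⟩ := hS
    by_cases hpi : p i = 0
    · have hsum' : ∑ x ∈ S.erase i, p x = 0 := by
        rw [Finset.sum_erase_eq_sub hi, hsum, hpi, sub_zero]
      have hcard' : (S.erase i).card ≤ N := by
        rw [Finset.card_erase_of_mem hi]; omega
      obtain ⟨L, hv, hl, hnet⟩ := ih (S.erase i) p hcard' hsum'
      refine ⟨L, hv, ?_, ?_⟩
      · calc L.length + 1 ≤ max (S.erase i).card 1 := hl
          _ ≤ max S.card 1 := by
            have := Finset.card_erase_le (a := i) (s := S); omega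
      · intro j
        rw [hnet j]
        by_cases hj : j = i
        · subst hj; simp [hi, hpi]
        · simp [Finset.mem_erase, hj]
    · -- p i ≠ 0, so S has at least 2 elements
      have h2 : 2 ≤ S.card := by
        by_contra h
        have h1 : S.card = 1 := by
          have := Finset.card_pos.mpr ⟨i, hi⟩; omega
        obtain ⟨a, ha⟩ := Finset.card_eq_one.mp h1
        subst ha
        rw [Finset.mem_singleton] at hi
        subst hi
        simp at hsum
        exact hpi hsum
      have hne : (S.erase i).Nonempty := by
        rw [← Finset.card_pos, Finset.card_erase_of_mem hi]; omega
      obtain ⟨j, hj⟩ := hne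
      have hji : j ≠ i := (Finset.mem_erase.mp hj).1
      have hjS : j ∈ S := (Finset.mem_erase.mp hj).2
      set p' : Fin m → ℤ := fun x => if x = i then 0 else if x = j then p j + p i else p x
        with hp'
      have hsum' : ∑ x ∈ S.erase i, p' x = 0 := by
        have : ∀ x ∈ S.erase i, p' x = p x + (if x = j then p i else 0) := by
          intro x hx
          have hxi := (Finset.mem_erase.mp hx).1
          by_cases hxj : x = j <;> simp [hp', hxi, hxj, hji] <;> ring
        rw [Finset.sum_congr rfl this, Finset.sum_add_distrib,
          Finset.sum_erase_eq_sub hi, hsum, Finset.sum_ite_eq' (S.erase i) j (fun _ => p i)]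
        simp [hj]
      have hcard' : (S.erase i).card ≤ N := by
        rw [Finset.card_erase_of_mem hi]; omega
      obtain ⟨L, hv, hl, hnet⟩ := ih (S.erase i) p' hcard' hsum'
      set t : Txn m := if 0 < p i then (i, j, p i) else (j, i, -p i) with ht
      have hδ : ∀ x, (if t.1 = x then t.2.2 else 0) - (if t.2.1 = x then t.2.2 else 0)
          = (if x = i then p i else 0) - (if x = j then p i else 0) := by
        intro x
        by_cases hp0 : 0 < p i <;>
          by_cases hxi : x = i <;> by_cases hxj : x = j <;>
          simp_all [ht] <;> try omega
      refine ⟨t :: L, ?_, ?_, ?_⟩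
      · intro u hu
        rcases List.mem_cons.mp hu with h | h
        · subst h
          by_cases hp0 : 0 < p i <;> simp [ht, hp0, hji, Ne.symm hji] <;> omega
        · exact hv u h
      · have hc : (S.erase i).card = S.card - 1 := Finset.card_erase_of_mem hi
        simp only [List.length_cons]
        omega
      · intro x
        rw [netAmt_cons, hδ x, hnet x]
        by_cases hxi : x = i
        · subst hxi; simp [hi, hji, Ne.symm hji, hpi, hp']
        · by_cases hxj : x = j
          · subst hxj; simp [hj, hjS, hxi, hp']; try ring
          · by_cases hxS : x ∈ S <;>
              simp [Finset.mem_erase, hxi, hxj, hxS, hp']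

lemma filter_len_le {α : Type*} (l : List α) (P Q R : α → Bool)
    (hPR : ∀ x ∈ l, P x → R x) (hQR : ∀ x ∈ l, Q x → R x)
    (hPQ : ∀ x ∈ l, ¬(P x ∧ Q x)) :
    (l.filter P).length + (l.filter Q).length ≤ (l.filter R).length := by
  induction l with
  | nil => simp
  | cons a l ihl =>
    have h1 := hPR a List.mem_cons_self
    have h2 := hQR a List.mem_cons_self
    have h3 := hPQ a List.mem_cons_self
    have ih := ihl (fun x hx => hPR x (List.mem_cons_of_mem a hx))
      (fun x hx => hQR x (List.mem_cons_of_mem a hx))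
      (fun x hx => hPQ x (List.mem_cons_of_mem a hx))
    rw [List.filter_cons, List.filter_cons, List.filter_cons]
    cases hP : P a <;> cases hQ : Q a <;> cases hR : R a <;> simp_all <;> omega

lemma comp_aux {m : ℕ} : ∀ (N : ℕ) (L : List (Txn m)), L.length ≤ N → ∀ v : Fin m,
    ∃ C : Finset (Fin m), v ∈ C ∧ (∀ t ∈ L, (t.1 ∈ C ↔ t.2.1 ∈ C)) ∧
      C.card ≤ (L.filter (fun t => t.1 ∈ C)).length + 1 := by
  intro N
  induction N with
  | zero =>
    intro L hL v
    have : L = [] := List.length_eq_zero_iff.mp (Nat.le_zero.mp hL)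
    subst this
    exact ⟨{v}, Finset.mem_singleton_self v, by simp, by simp⟩
  | succ N ih =>
    intro L hL v
    match L with
    | [] => exact ⟨{v}, Finset.mem_singleton_self v, by simp, by simp⟩
    | t :: L' =>
      have hL' : L'.length ≤ N := by simpa using hL
      obtain ⟨C', hv', hcl', hcard'⟩ := ih L' hL' v
      by_cases hcl : (t.1 ∈ C' ↔ t.2.1 ∈ C')
      · refine ⟨C', hv', ?_, ?_⟩
        · intro u hu
          rcases List.mem_cons.mp hu with h | h
          · subst h; exact hcl
          · exact hcl' u h
        · refine hcard'.trans ?_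
          rw [List.filter_cons]
          by_cases h : t.1 ∈ C' <;> simp [h]
      · -- exactly one endpoint of t is in C'; let w be the other
        set w : Fin m := if t.1 ∈ C' then t.2.1 else t.1 with hw
        have hwC' : w ∉ C' := by
          by_cases h : t.1 ∈ C' <;> simp [hw, h] <;> tauto
        set L'' := L'.filter (fun t' => t'.1 ∉ C') with hL''
        have hlen'' : L''.length ≤ N := (List.length_filter_le _ _).trans hL'
        obtain ⟨C'', hw'', hcl'', hcard''⟩ := ih L'' hlen'' w
        have ht1 : t.1 ∈ C' ∪ C'' := by
          by_cases h : t.1 ∈ C'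
          · exact Finset.mem_union_left _ h
          · apply Finset.mem_union_right
            have : w = t.1 := by simp [hw, h]
            rwa [← this]
        have ht2 : t.2.1 ∈ C' ∪ C'' := by
          by_cases h : t.1 ∈ C'
          · apply Finset.mem_union_right
            have : w = t.2.1 := by simp [hw, h]
            rwa [← this]
          · exact Finset.mem_union_left _ (by tauto)
        refine ⟨C' ∪ C'', Finset.mem_union_left _ hv', ?_, ?_⟩
        · -- closedness
          intro u hu
          rcases List.mem_cons.mp hu with h | h
          · subst h; exact iff_of_true ht1 ht2
          · by_cases ha : u.1 ∈ C'
            · have hb := (hcl' u h).mp ha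
              exact iff_of_true (Finset.mem_union_left _ ha) (Finset.mem_union_left _ hb)
            · have hb : u.2.1 ∉ C' := fun hc => ha ((hcl' u h).mpr hc)
              have hu'' : u ∈ L'' := by
                rw [hL'', List.mem_filter]
                exact ⟨h, by simpa using ha⟩
              have := hcl'' u hu''
              simp only [Finset.mem_union]
              tauto
        · -- cardinality
          have hcu : (C' ∪ C'').card ≤ C'.card + C''.card := Finset.card_union_le _ _
          have hb : (L''.filter (fun t' => t'.1 ∈ C'')).length
              = (L'.filter (fun t' => t'.1 ∉ C' ∧ t'.1 ∈ C'')).length := by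
            rw [hL'', List.filter_filter]
            congr 1
            apply List.filter_congr
            intro x _
            by_cases h1 : x.1 ∈ C'' <;> by_cases h2 : x.1 ∈ C' <;> simp [h1, h2]
          have hkey : (L'.filter (fun t' => t'.1 ∈ C')).length
              + (L'.filter (fun t' => t'.1 ∉ C' ∧ t'.1 ∈ C'')).length
              ≤ (L'.filter (fun t' => t'.1 ∈ C' ∪ C'')).length := by
            apply filter_len_le
            · intro x _ hx
              simp only [decide_eq_true_eq] at hx ⊢
              exact Finset.mem_union_left _ hx
            · intro x _ hx
              simp only [decide_eq_true_eq] at hx ⊢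
              exact Finset.mem_union_right _ hx.2
            · intro x _ hx
              simp only [decide_eq_true_eq] at hx
              tauto
          have hfc : ((t :: L').filter (fun t' => t'.1 ∈ C' ∪ C'')).length
              = (L'.filter (fun t' => t'.1 ∈ C' ∪ C'')).length + 1 := by
            rw [List.filter_cons]
            simp [ht1]
          rw [hfc]
          omega

/-- correctness of the reduction from Subset Sum to SEP.  For
`k : Fin n → ℤ` with sum `s`, extend to `n + 1` participants by giving the extra
participant balance `-s`.  Then some nonempty subset of the original values sums to
zero iff `s = 0` or the extended instance can be settled with fewer than `n`
transactions. -/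
theorem subset_sum_reduction_correct (n : ℕ) (hn : 1 ≤ n) (k : Fin n → ℤ) :
    (∃ S : Finset (Fin n), S.Nonempty ∧ ∑ i ∈ S, k i = 0) ↔
    ((∑ i, k i) = 0 ∨
      ∃ L : List (Txn (n + 1)),
        ValidTxns L ∧
        Settles L (fun i => if h : (i : ℕ) < n then k ⟨i,h⟩ else -(∑ j, k j)) ∧
        L.length < n) := by
  set p : Fin (n + 1) → ℤ := fun i => if h : (i : ℕ) < n then k ⟨i, h⟩ else -(∑ j, k j)
    with hp
  have hpcast : ∀ i : Fin n, p i.castSucc = k i := by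
    intro i
    simp [hp, Fin.castSucc, i.isLt]
  have hpsum : ∑ j, p j = 0 := by
    rw [Fin.sum_univ_castSucc]
    have : p (Fin.last n) = -(∑ j, k j) := by simp [hp]
    rw [this, Finset.sum_congr rfl (fun i _ => hpcast i)]
    ring
  constructor
  · rintro ⟨S₀, hS₀ne, hS₀sum⟩
    right
    set S₁ : Finset (Fin (n + 1)) := S₀.image Fin.castSucc with hS₁
    have hS₁sum : ∑ j ∈ S₁, p j = 0 := by
      rw [hS₁, Finset.sum_image (fun a _ b _ h => Fin.castSucc_injective n h)]
      rw [Finset.sum_congr rfl (fun i _ => hpcast i)]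
      exact hS₀sum
    have hS₁card : S₁.card = S₀.card := Finset.card_image_of_injective _
      (Fin.castSucc_injective n)
    set S₂ : Finset (Fin (n + 1)) := Finset.univ \ S₁ with hS₂
    have hlast : Fin.last n ∈ S₂ := by
      rw [hS₂, Finset.mem_sdiff]
      refine ⟨Finset.mem_univ _, ?_⟩
      rw [hS₁]
      simp only [Finset.mem_image]
      rintro ⟨a, _, ha⟩
      have := congrArg Fin.val ha
      simp [Fin.castSucc] at this
      omega
    have hS₂sum : ∑ j ∈ S₂, p j = 0 := by
      rw [hS₂, Finset.sum_sdiff_eq_sub (Finset.subset_univ _), hpsum, hS₁sum, sub_zero]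
    obtain ⟨L₁, hv₁, hl₁, hnet₁⟩ := settle_aux S₁.card S₁ p le_rfl hS₁sum
    obtain ⟨L₂, hv₂, hl₂, hnet₂⟩ := settle_aux S₂.card S₂ p le_rfl hS₂sum
    refine ⟨L₁ ++ L₂, ?_, ?_, ?_⟩
    · intro u hu
      rcases List.mem_append.mp hu with h | h
      · exact hv₁ u h
      · exact hv₂ u h
    · rw [settles_iff]
      intro j
      rw [netAmt_append, hnet₁ j, hnet₂ j]
      by_cases h : j ∈ S₁
      · have : j ∉ S₂ := by rw [hS₂, Finset.mem_sdiff]; tauto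
        simp [h, this]
      · have : j ∈ S₂ := by
          rw [hS₂, Finset.mem_sdiff]; exact ⟨Finset.mem_univ _, h⟩
        simp [h, this]
    · rw [List.length_append]
      have hc1 : 1 ≤ S₁.card := by
        rw [hS₁card]; exact Finset.card_pos.mpr hS₀ne
      have hc2 : 1 ≤ S₂.card := Finset.card_pos.mpr ⟨_, hlast⟩
      have hm1 : max S₁.card 1 = S₁.card := max_eq_left hc1
      have hm2 : max S₂.card 1 = S₂.card := max_eq_left hc2
      have hcards : S₁.card + S₂.card = n + 1 := by
        rw [hS₂, Finset.card_sdiff_of_subset (Finset.subset_univ _)]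
        have := Finset.card_le_univ S₁
        simp only [Finset.card_univ, Fintype.card_fin] at *
        omega
      omega
  · rintro (hs | ⟨L, hv, hset, hlen⟩)
    · exact ⟨Finset.univ, ⟨⟨0, hn⟩, Finset.mem_univ _⟩, hs⟩
    · -- use the component of the last vertex
      obtain ⟨C, hvC, hclC, hcardC⟩ := comp_aux L.length L le_rfl (Fin.last n)
      have hcC : C.card ≤ n := by
        have := List.length_filter_le (fun t : Txn (n+1) => decide (t.1 ∈ C)) L
        omega
      set D : Finset (Fin (n + 1)) := Finset.univ \ C with hD
      have hDne : D.Nonempty := by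
        rw [hD, ← Finset.card_pos, Finset.card_sdiff_of_subset (Finset.subset_univ _)]
        simp only [Finset.card_univ, Fintype.card_fin]
        omega
      have hclD : ∀ t ∈ L, (t.1 ∈ D ↔ t.2.1 ∈ D) := by
        intro t ht
        rw [hD]
        simp only [Finset.mem_sdiff, Finset.mem_univ, true_and]
        exact not_iff_not.mpr (hclC t ht)
      have hDsum : ∑ j ∈ D, p j = 0 := by
        rw [settles_iff] at hset
        calc ∑ j ∈ D, p j = ∑ j ∈ D, netAmt L j :=
              Finset.sum_congr rfl (fun j _ => (hset j).symm)
          _ = 0 := net_sum_zero L D hclD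
      have hDlt : ∀ j ∈ D, (j : ℕ) < n := by
        intro j hj
        rw [hD, Finset.mem_sdiff] at hj
        have hne : j ≠ Fin.last n := fun h => hj.2 (h ▸ hvC)
        have hlt := j.isLt
        by_contra h
        have hjn : (j : ℕ) = n := by omega
        exact hne (Fin.ext (by simp [Fin.val_last, hjn]))
      -- map D back to Fin n
      set f : Fin (n + 1) → Fin n := fun j => if h : (j : ℕ) < n then ⟨j, h⟩ else ⟨0, hn⟩
        with hf
      refine ⟨D.image f, hDne.image f, ?_⟩
      rw [Finset.sum_image ?inj]
      case inj =>
        intro a ha b hb hab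
        have h1 := hDlt a ha
        have h2 := hDlt b hb
        rw [hf] at hab
        simp only [dif_pos h1, dif_pos h2] at hab
        have := congrArg Fin.val hab
        simp at this
        exact Fin.ext this
      rw [← hDsum]
      apply Finset.sum_congr rfl
      intro j hj
      have h1 := hDlt j hj
      rw [hf, hp]
      simp [h1]
end

section
/- Let n ≥ 2, let B ≥ 1 be an integer, and let p : Fin n → ℤ satisfy ∑ i, p i = 0 and p i < B for all i. Let t 1 be any integer with 1 ≤ t 1 ≤ B, and define recursively for i = 2, …, n: t i = ((p i + t (i−1) − 1) mod B) + 1, where mod denotes the nonnegative remainder. Define the new balance vector p' by p' 1 = p 1 − t 1 + t n and p' i = p i + t (i−1) − t i for 2 ≤ i ≤ n. Then: (a) 1 ≤ t i ≤ B for all i; (b) ∑ i, p' i = 0; (c) B divides p' i for all i; (d) p' i ≤ B for all i; (e) for every i with p i ≥ 0, p' i = 0 or p' i = B. -/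
lemma aux_le (B x : ℤ) (hB : 1 ≤ B) (hd : B ∣ x) (hx : x < 2 * B) : x ≤ B := by
  obtain ⟨k, rfl⟩ := hd
  have hk : k ≤ 1 := by nlinarith
  nlinarith

lemma aux_mem (B x : ℤ) (hB : 1 ≤ B) (hd : B ∣ x) (hlo : -B < x) (hhi : x < 2 * B) :
    x = 0 ∨ x = B := by
  obtain ⟨k, rfl⟩ := hd
  have hk1 : k ≤ 1 := by nlinarith
  have hk0 : 0 ≤ k := by nlinarith
  interval_cases k <;> simp

/-- correctness of the first round (secure rounding to a multiple of the
bound) of the Conspiracy Santa protocol.  Participants are indexed `1, …, n`, `p i` is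
the balance of participant `i`, `t i` is the amount sent by participant `i`
(`t 1 ∈ [1, B]` arbitrary, then `t i = ((p i + t (i-1) - 1) mod B) + 1`), and `p'` is
the resulting balance vector.  Then every transferred amount lies in `[1, B]`, the new
balances sum to zero, are multiples of `B`, are at most `B`, and every debtor ends at
`0` or `B`. -/
theorem first_round_correct (n : ℕ) (hn : 2 ≤ n) (B : ℤ) (hB : 1 ≤ B)
    (p t p' : ℕ → ℤ)
    (hsum : ∑ i ∈ Finset.Icc 1 n, p i = 0)
    (hlt : ∀ i ∈ Finset.Icc 1 n, p i < B)
    (ht1 : 1 ≤ t 1 ∧ t 1 ≤ B)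
    (htrec : ∀ i, 2 ≤ i → i ≤ n → t i = (p i + t (i - 1) - 1) % B + 1)
    (hp'1 : p' 1 = p 1 - t 1 + t n)
    (hp'i : ∀ i, 2 ≤ i → i ≤ n → p' i = p i + t (i - 1) - t i) :
    (∀ i ∈ Finset.Icc 1 n, 1 ≤ t i ∧ t i ≤ B) ∧
    (∑ i ∈ Finset.Icc 1 n, p' i = 0) ∧
    (∀ i ∈ Finset.Icc 1 n, B ∣ p' i) ∧
    (∀ i ∈ Finset.Icc 1 n, p' i ≤ B) ∧
    (∀ i ∈ Finset.Icc 1 n, 0 ≤ p i → p' i = 0 ∨ p' i = B) := by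
  have hB0 : 0 < B := hB
  -- (a) transfer bounds
  have htB : ∀ i ∈ Finset.Icc 1 n, 1 ≤ t i ∧ t i ≤ B := by
    intro i hi
    rw [Finset.mem_Icc] at hi
    rcases eq_or_lt_of_le hi.1 with h1 | h1
    · exact h1 ▸ ht1
    · have h2 : 2 ≤ i := h1
      rw [htrec i h2 hi.2]
      have hm0 := Int.emod_nonneg (p i + t (i - 1) - 1) (by omega : B ≠ 0)
      have hm1 := Int.emod_lt_of_pos (p i + t (i - 1) - 1) hB0
      omega
  -- divisibility for i ≥ 2
  have hdvd2 : ∀ i, 2 ≤ i → i ≤ n → B ∣ p' i := by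
    intro i h2 hin
    rw [hp'i i h2 hin, htrec i h2 hin]
    refine ⟨(p i + t (i - 1) - 1) / B, ?_⟩
    have := Int.mul_ediv_add_emod (p i + t (i - 1) - 1) B
    linarith
  -- decomposition of Icc 1 n
  have hdecomp : Finset.Icc 1 n = insert 1 (Finset.Icc 2 n) := by
    ext x; simp only [Finset.mem_Icc, Finset.mem_insert]; omega
  have hnotmem : (1 : ℕ) ∉ Finset.Icc 2 n := by simp
  -- telescoping
  have key : ∀ m, 1 ≤ m → ∑ i ∈ Finset.Icc 2 m, (t (i - 1) - t i) = t 1 - t m := by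
    intro m hm
    induction m with
    | zero => omega
    | succ k ih =>
      rcases Nat.eq_or_lt_of_le hm with h | h
      · simp [← h]
      · have hk : 1 ≤ k := by omega
        rw [Finset.sum_Icc_succ_top (by omega : 2 ≤ k + 1), ih hk]
        simp only [Nat.add_sub_cancel]
        ring
  have hsum2 : ∑ i ∈ Finset.Icc 2 n, p' i = (∑ i ∈ Finset.Icc 2 n, p i) + t 1 - t n := by
    have : ∑ i ∈ Finset.Icc 2 n, p' i
        = ∑ i ∈ Finset.Icc 2 n, (p i + (t (i - 1) - t i)) := by
      apply Finset.sum_congr rfl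
      intro i hi
      rw [Finset.mem_Icc] at hi
      rw [hp'i i hi.1 hi.2]; ring
    rw [this, Finset.sum_add_distrib, key n (by omega)]
    ring
  have hsum' : ∑ i ∈ Finset.Icc 1 n, p' i = 0 := by
    rw [hdecomp, Finset.sum_insert hnotmem, hsum2, hp'1]
    rw [hdecomp, Finset.sum_insert hnotmem] at hsum
    linarith
  -- divisibility for all i
  have hdvd : ∀ i ∈ Finset.Icc 1 n, B ∣ p' i := by
    intro i hi
    rw [Finset.mem_Icc] at hi
    rcases eq_or_lt_of_le hi.1 with h1 | h1
    · have hp'1eq : p' 1 = -∑ i ∈ Finset.Icc 2 n, p' i := by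
        rw [hdecomp, Finset.sum_insert hnotmem] at hsum'
        linarith
      rw [← h1, hp'1eq]
      exact dvd_neg.mpr (Finset.dvd_sum fun j hj => by
        rw [Finset.mem_Icc] at hj; exact hdvd2 j hj.1 hj.2)
    · exact hdvd2 i h1 hi.2
  -- bound p' i < 2B, and lower bound when p i ≥ 0
  have hub : ∀ i ∈ Finset.Icc 1 n, p' i < 2 * B := by
    intro i hi
    have hpi := hlt i hi
    rw [Finset.mem_Icc] at hi
    rcases eq_or_lt_of_le hi.1 with h1 | h1
    · have htn := htB n (by simp [Finset.mem_Icc]; omega)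
      rw [← h1] at hpi
      rw [← h1, hp'1]
      have := ht1.1
      linarith [htn.2]
    · have h2 : 2 ≤ i := h1
      have hti := htB i (by rw [Finset.mem_Icc]; omega)
      have hti1 := htB (i - 1) (by rw [Finset.mem_Icc]; omega)
      rw [hp'i i h2 hi.2]
      linarith [hti.1, hti1.2]
  have hlb : ∀ i ∈ Finset.Icc 1 n, 0 ≤ p i → -B < p' i := by
    intro i hi hpi
    rw [Finset.mem_Icc] at hi
    rcases eq_or_lt_of_le hi.1 with h1 | h1
    · have htn := htB n (by simp [Finset.mem_Icc]; omega)
      rw [← h1, hp'1]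
      rw [← h1] at hpi
      linarith [ht1.2, htn.1]
    · have h2 : 2 ≤ i := h1
      have hti := htB i (by rw [Finset.mem_Icc]; omega)
      have hti1 := htB (i - 1) (by rw [Finset.mem_Icc]; omega)
      rw [hp'i i h2 hi.2]
      linarith [hti.2, hti1.1]
  refine ⟨htB, hsum', hdvd, ?_, ?_⟩
  · intro i hi
    exact aux_le B (p' i) hB (hdvd i hi) (hub i hi)
  · intro i hi hpi
    exact aux_mem B (p' i) hB (hdvd i hi) (hlb i hi hpi) (hub i hi)
end

section
/- Let n ≥ 2, let B ≥ 1 be an integer, and let p : Fin n → ℤ satisfy ∑ i, p i = 0 and p i < B for all i. Define the extended balance vector q : Fin (n + 1) → ℤ by q i = p i for i < n and q n = 0 (participant n is the piggy bank). Then there exists a list L of transactions on Fin (n + 1) with L.length = 3 · n, each transaction having amount a with 1 ≤ a ≤ B, such that L settles q. -/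
lemma txn_net {m : ℕ} (L : List (Txn m)) (k : Fin m) :
    ((L.filter (fun t => t.1 = k)).map (fun t => t.2.2)).sum
      - ((L.filter (fun t => t.2.1 = k)).map (fun t => t.2.2)).sum
    = (L.map (fun t => (if t.1 = k then t.2.2 else 0) - (if t.2.1 = k then t.2.2 else 0))).sum := by
  induction L with
  | nil => simp
  | cons a l ih =>
    simp only [List.filter_cons, List.map_cons, List.sum_cons]
    split_ifs <;> simp_all <;> linarith

lemma fin_shift_sum (n : ℕ) [NeZero n] (t : Fin n → ℤ) :
    ∑ j : Fin n, t (j - 1) = ∑ j, t j :=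
  Fintype.sum_equiv (Equiv.subRight (1 : Fin n)) _ _ (fun _ => rfl)

lemma fin_shift_ite (n : ℕ) [NeZero n] (j : Fin n) (t : Fin n → ℤ) :
    ∑ i : Fin n, (if i + 1 = j then t i else 0) = t (j - 1) := by
  rw [← Fintype.sum_ite_eq' (j - 1) t]
  refine Finset.sum_congr rfl fun i _ => ?_
  congr 1
  simp [eq_sub_iff_add_eq]

lemma sum_map_bind {α β : Type*} [AddCommMonoid β] (l : List α) (f : α → List β) :
    (l.flatMap f).sum = (l.map (fun a => (f a).sum)).sum := by
  induction l with
  | nil => simp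
  | cons a l ih => simp [ih]

lemma len_bind {α β : Type*} (l : List α) (f : α → List β) :
    (l.flatMap f).length = (l.map (fun a => (f a).length)).sum := by
  induction l with
  | nil => simp
  | cons a l ih => simp [ih]

theorem cs_aux (n' : ℕ) (B : ℤ) (hB : 1 ≤ B)
    (p : Fin (n' + 2) → ℤ) (hsum : ∑ i, p i = 0) (hlt : ∀ i, p i < B) :
    ∃ L : List (Txn (n' + 2 + 1)),
      L.length = 3 * (n' + 2) ∧
      (∀ t ∈ L, t.1 ≠ t.2.1 ∧ 1 ≤ t.2.2 ∧ t.2.2 ≤ B) ∧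
      Settles L (fun i => if h : (i : ℕ) < n' + 2 then p ⟨i, h⟩ else 0) := by
  have hB0 : (0:ℤ) < B := by omega
  have hBne : B ≠ 0 := by omega
  set P : ℕ → ℤ := fun j => if h : j < n' + 2 then p ⟨j, h⟩ else 0 with hP
  set S : ℕ → ℤ := fun m => ∑ j ∈ Finset.range m, P j with hS
  set f : ℤ → ℤ := fun x => (x - 1) % B + 1 with hf
  have hf1 : ∀ x, 1 ≤ f x := fun x => by
    have := Int.emod_nonneg (x - 1) hBne
    simp only [hf]; omega
  have hf2 : ∀ x, f x ≤ B := fun x => by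
    have := Int.emod_lt_of_pos (x - 1) hB0
    simp only [hf]; omega
  have hfd : ∀ x, B ∣ (x - f x) := fun x =>
    ⟨(x - 1) / B, by simp only [hf]; rw [Int.emod_def]; ring⟩
  set t : Fin (n' + 2) → ℤ := fun i => f (S (i.val + 1)) with ht
  set r : Fin (n' + 2) → ℤ := fun j => p j + t (j - 1) - t j with hr
  have hrj : ∀ j, r j = p j + t (j - 1) - t j := fun j => by rw [hr]
  have hSsucc : ∀ m, S (m + 1) = S m + P m := fun m => Finset.sum_range_succ P m
  have hPval : ∀ j : Fin (n' + 2), P j.val = p j := fun j => by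
    simp only [hP]; rw [dif_pos j.isLt]
  have hSN : S (n' + 2) = 0 := by
    rw [hS]
    simp only
    rw [← Fin.sum_univ_eq_sum_range P (n' + 2), ← hsum]
    exact Finset.sum_congr rfl fun i _ => hPval i
  have hrd : ∀ j, B ∣ r j := by
    intro j
    by_cases h0 : j = 0
    · subst h0
      have hv : ((0 - 1 : Fin (n' + 2)) : ℕ) = n' + 1 := by
        rw [Fin.coe_sub_one, if_pos rfl]
      have e1 : t (0 - 1) = f (S (n' + 2)) := by rw [ht]; simp only; rw [hv]
      have e2 : t 0 = f (S 1) := rfl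
      have e3 : S 1 = p 0 := by
        rw [hSsucc 0]
        have h4 : S 0 = 0 := by simp [hS]
        rw [h4, zero_add]
        exact hPval 0
      have e5 : r 0 = (p 0 - f (p 0)) - (0 - f 0) := by
        rw [hrj, e1, e2, e3, hSN]; ring
      rw [e5]
      exact dvd_sub (hfd (p 0)) (by simpa using hfd 0)
    · have hv : ((j - 1 : Fin (n' + 2)) : ℕ) = (j : ℕ) - 1 := by
        rw [Fin.coe_sub_one, if_neg h0]
      have hj1 : 1 ≤ (j : ℕ) := by
        rcases Nat.eq_zero_or_pos (j : ℕ) with h | h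
        · exact absurd (Fin.ext h) h0
        · exact h
      have e1 : t (j - 1) = f (S (j : ℕ)) := by
        rw [ht]; simp only; rw [hv]
        have h5 : (j : ℕ) - 1 + 1 = (j : ℕ) := by omega
        rw [h5]
      have e2 : S ((j : ℕ) + 1) = S (j : ℕ) + p j := by rw [hSsucc, hPval]
      have e5 : r j = (S (j : ℕ) + p j - f (S (j : ℕ) + p j)) - (S (j : ℕ) - f (S (j : ℕ))) := by
        rw [hrj, e1, ht]; simp only
        rw [e2]; ring
      rw [e5]
      exact dvd_sub (hfd _) (hfd _)
  have hrub : ∀ j, r j ≤ 2 * B - 2 := by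
    intro j
    have h1 := hlt j
    have h2 := hf2 (S (((j - 1 : Fin (n' + 2)) : ℕ) + 1))
    have h3 := hf1 (S ((j : ℕ) + 1))
    rw [hrj]
    rw [ht]; simp only
    omega
  have hrB : ∀ j, 0 < r j → r j = B := by
    intro j hj
    obtain ⟨c, hc⟩ := hrd j
    have h2 := hrub j
    have hc1 : c = 1 := by nlinarith
    rw [hc, hc1, mul_one]
  set w : Fin (n' + 2) → ℕ := fun j => (-(r j) / B).toNat with hwdef
  have hw : ∀ j, r j ≤ 0 → (w j : ℤ) * B = - r j := by
    intro j hj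
    have hd : B ∣ -r j := dvd_neg.mpr (hrd j)
    have hnn : 0 ≤ -r j / B := Int.ediv_nonneg (by omega) hB0.le
    rw [hwdef]; simp only
    rw [Int.toNat_of_nonneg hnn, Int.ediv_mul_cancel hd]
  have hw0 : ∀ j, 0 < r j → w j = 0 := by
    intro j hj
    have hrjB := hrB j hj
    have hneg : -r j / B < 0 := Int.ediv_neg_of_neg_of_pos (by omega) hB0
    rw [hwdef]; simp only
    exact Int.toNat_of_nonpos hneg.le
  have hrsum : ∑ j, r j = 0 := by
    have h1 : ∑ j : Fin (n' + 2), t (j - 1) = ∑ j, t j := fin_shift_sum _ t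
    have h2 : ∑ j, r j = ∑ j, (p j + t (j - 1) - t j) :=
      Finset.sum_congr rfl fun j _ => hrj j
    rw [h2, Finset.sum_sub_distrib, Finset.sum_add_distrib, h1, hsum]
    ring
  set k := (Finset.univ.filter (fun i : Fin (n' + 2) => 0 < r i)).card with hk
  have hk_le : k ≤ n' + 2 := le_trans (Finset.card_filter_le _ _) (by simp)
  have e1 : ∑ j, (if 0 < r j then r j else 0) = (k : ℤ) * B := by
    rw [Finset.sum_ite, Finset.sum_const_zero, add_zero]
    rw [Finset.sum_congr rfl (fun j hj => hrB j (Finset.mem_filter.mp hj).2)]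
    rw [Finset.sum_const, hk, nsmul_eq_mul]
  have eB : ∑ j, (if 0 < r j then B else 0) = (k : ℤ) * B := by
    rw [Finset.sum_ite, Finset.sum_const_zero, add_zero, Finset.sum_const, hk, nsmul_eq_mul]
  have e3 : ∑ j, ((if 0 < r j then r j else 0) - (if 0 < r j then 0 else -r j)) = 0 := by
    have h6 : ∑ j, ((if 0 < r j then r j else 0) - (if 0 < r j then 0 else -r j)) = ∑ j, r j :=
      Finset.sum_congr rfl fun j _ => by split_ifs <;> ring
    rw [h6, hrsum]
  have hwsum : ∑ j, ((w j : ℤ) * B) = (k : ℤ) * B := by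
    have e2 : ∑ j, ((w j : ℤ) * B) = ∑ j, (if 0 < r j then (0:ℤ) else -r j) := by
      refine Finset.sum_congr rfl fun j _ => ?_
      by_cases hj : 0 < r j
      · rw [if_pos hj, hw0 j hj]; simp
      · rw [if_neg hj, hw j (by omega)]
    rw [Finset.sum_sub_distrib] at e3
    rw [e2]
    linarith
  have hwk : ∑ j, w j = k := by
    have h5 : ((∑ j, w j : ℕ) : ℤ) * B = (k : ℤ) * B := by
      push_cast
      rw [Finset.sum_mul]
      exact hwsum
    have h6 := mul_right_cancel₀ hBne h5
    exact_mod_cast h6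
  -- the lists
  set bank : Fin (n' + 2 + 1) := Fin.last (n' + 2) with hbank
  set π : Fin (n' + 2) → Fin (n' + 2 + 1) := Fin.castSucc with hπ
  have hπbank : ∀ i, π i ≠ bank := fun i => (Fin.castSucc_lt_last i).ne
  have hbankπ : ∀ i, bank ≠ π i := fun i h => hπbank i h.symm
  have hππ : ∀ i j : Fin (n' + 2), (π i = π j) ↔ i = j := fun i j => Fin.castSucc_inj
  have hne1 : ∀ i : Fin (n' + 2), i ≠ i + 1 := by
    intro i h
    have h1 : (1 : Fin (n' + 2)) = 0 := (left_eq_add).mp h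
    rw [Fin.one_eq_zero_iff] at h1
    omega
  set Lc : List (Txn (n' + 2 + 1)) := (List.finRange (n' + 2)).map (fun i => (π i, π (i+1), t i)) with hLc
  set Lpos : List (Txn (n' + 2 + 1)) :=
    (List.finRange (n' + 2)).flatMap (fun i => if 0 < r i then [(π i, bank, B)] else []) with hLpos
  set Lneg : List (Txn (n' + 2 + 1)) :=
    (List.finRange (n' + 2)).flatMap (fun i => List.replicate (w i) (bank, π i, B)) with hLneg
  set Lp1 : List (Txn (n' + 2 + 1)) := List.replicate (n' + 2 - k) (π 0, bank, 1) with hLp1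
  set Lp2 : List (Txn (n' + 2 + 1)) := List.replicate (n' + 2 - k) (bank, π 0, 1) with hLp2
  refine ⟨Lc ++ (Lpos ++ (Lneg ++ (Lp1 ++ Lp2))), ?_, ?_, ?_⟩
  · -- length
    have l1 : Lc.length = n' + 2 := by simp [hLc]
    have l2 : Lpos.length = k := by
      rw [hLpos, len_bind, ← Fin.sum_univ_def]
      have h7 : ∀ i : Fin (n' + 2),
          (if 0 < r i then [((π i, bank, B) : Txn (n' + 2 + 1))] else []).length
            = if 0 < r i then 1 else 0 := fun i => by split_ifs <;> rfl
      rw [Finset.sum_congr rfl fun i _ => h7 i, hk, Finset.card_filter]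
    have l3 : Lneg.length = k := by
      rw [hLneg, len_bind, ← Fin.sum_univ_def]
      simp only [List.length_replicate]
      exact hwk
    have l4 : Lp1.length = n' + 2 - k := by simp [hLp1]
    have l5 : Lp2.length = n' + 2 - k := by simp [hLp2]
    simp only [List.length_append, l1, l2, l3, l4, l5]
    omega
  · -- validity
    intro tx htx
    simp only [List.mem_append] at htx
    rcases htx with h | h | h | h | h
    · rw [hLc] at h
      obtain ⟨i, _, rfl⟩ := List.mem_map.mp h
      refine ⟨?_, hf1 _, hf2 _⟩
      simp only [ne_eq, hππ]
      exact hne1 i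
    · rw [hLpos] at h
      obtain ⟨i, _, hmem⟩ := List.mem_flatMap.mp h
      by_cases hp : 0 < r i
      · rw [if_pos hp, List.mem_singleton] at hmem
        subst hmem
        exact ⟨hπbank i, hB, le_refl B⟩
      · rw [if_neg hp] at hmem; cases hmem
    · rw [hLneg] at h
      obtain ⟨i, _, hmem⟩ := List.mem_flatMap.mp h
      rw [List.eq_of_mem_replicate hmem]
      exact ⟨hbankπ i, hB, le_refl B⟩
    · rw [hLp1] at h
      rw [List.eq_of_mem_replicate h]
      exact ⟨hπbank 0, le_refl 1, hB⟩
    · rw [hLp2] at h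
      rw [List.eq_of_mem_replicate h]
      exact ⟨hbankπ 0, le_refl 1, hB⟩
  · -- settles
    intro k'
    rw [txn_net]
    set g : Txn (n' + 2 + 1) → ℤ :=
      fun tx => (if tx.1 = k' then tx.2.2 else 0) - (if tx.2.1 = k' then tx.2.2 else 0) with hg
    have hgval : ∀ a b : Fin (n' + 2 + 1), ∀ c : ℤ,
        g (a, b, c) = (if a = k' then c else 0) - (if b = k' then c else 0) := fun a b c => by
      rw [hg]
    simp only [List.map_append, List.sum_append]
    have sc : (Lc.map g).sum = ∑ i : Fin (n' + 2), g (π i, π (i + 1), t i) := by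
      rw [hLc, List.map_map, Fin.sum_univ_def]
      rfl
    have spos : (Lpos.map g).sum
        = ∑ i : Fin (n' + 2), (if 0 < r i then g (π i, bank, B) else 0) := by
      rw [hLpos, List.map_flatMap, sum_map_bind, ← Fin.sum_univ_def]
      refine Finset.sum_congr rfl fun i _ => ?_
      split_ifs <;> simp
    have sneg : (Lneg.map g).sum = ∑ i : Fin (n' + 2), (w i : ℤ) * g (bank, π i, B) := by
      rw [hLneg, List.map_flatMap, sum_map_bind, ← Fin.sum_univ_def]
      refine Finset.sum_congr rfl fun i _ => ?_
      rw [List.map_replicate, List.sum_replicate, nsmul_eq_mul]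
    have sp1 : (Lp1.map g).sum = ((n' + 2 - k : ℕ) : ℤ) * g (π 0, bank, 1) := by
      rw [hLp1, List.map_replicate, List.sum_replicate, nsmul_eq_mul]
    have sp2 : (Lp2.map g).sum = ((n' + 2 - k : ℕ) : ℤ) * g (bank, π 0, 1) := by
      rw [hLp2, List.map_replicate, List.sum_replicate, nsmul_eq_mul]
    rw [sc, spos, sneg, sp1, sp2]
    by_cases hk' : (k' : ℕ) < n' + 2
    · -- ordinary participant
      set j : Fin (n' + 2) := ⟨(k' : ℕ), hk'⟩ with hjdef
      have hkj : k' = π j := by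
        rw [hπ]; exact Fin.ext rfl
      have hbj : (bank = k') = False := by
        simp only [hkj, eq_iff_iff, iff_false]
        exact hbankπ j
      have gc : ∑ i, g (π i, π (i + 1), t i) = t j - t (j - 1) := by
        have h8 : ∀ i, g (π i, π (i + 1), t i)
            = (if i = j then t i else 0) - (if i + 1 = j then t i else 0) := by
          intro i
          rw [hgval, hkj]
          simp only [hππ]
        rw [Finset.sum_congr rfl fun i _ => h8 i, Finset.sum_sub_distrib,
          Fintype.sum_ite_eq' j t, fin_shift_ite]
      have gpos : ∑ i, (if 0 < r i then g (π i, bank, B) else 0)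
          = if 0 < r j then B else 0 := by
        have h8 : ∀ i, (if 0 < r i then g (π i, bank, B) else 0)
            = if i = j then (if 0 < r i then B else 0) else 0 := by
          intro i
          rw [hgval, hkj]
          simp only [hππ, hbj.symm ▸ (by rfl : (bank = π j) = (bank = π j))]
          rw [if_neg (hbankπ j), sub_zero]
          split_ifs with h1 h2 h2 <;> rfl
        rw [Finset.sum_congr rfl fun i _ => h8 i,
          Fintype.sum_ite_eq' j (fun i => if 0 < r i then B else 0)]
      have gneg : ∑ i, (w i : ℤ) * g (bank, π i, B) = -((w j : ℤ) * B) := by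
        have h8 : ∀ i, (w i : ℤ) * g (bank, π i, B)
            = if i = j then -((w i : ℤ) * B) else 0 := by
          intro i
          rw [hgval, hkj]
          simp only [hππ]
          rw [if_neg (hbankπ j), zero_sub]
          split_ifs with h1
          · ring
          · ring
        rw [Finset.sum_congr rfl fun i _ => h8 i,
          Fintype.sum_ite_eq' j (fun i => -((w i : ℤ) * B))]
      have gp1 : g (π 0, bank, 1) = if (0 : Fin (n' + 2)) = j then 1 else 0 := by
        rw [hgval, hkj]
        simp only [hππ]
        rw [if_neg (hbankπ j), sub_zero]
      have gp2 : g (bank, π 0, 1) = -(if (0 : Fin (n' + 2)) = j then 1 else 0) := by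
        rw [hgval, hkj]
        simp only [hππ]
        rw [if_neg (hbankπ j), zero_sub]
      rw [gc, gpos, gneg, gp1, gp2, dif_pos hk']
      have hpj : p ⟨(k' : ℕ), hk'⟩ = p j := rfl
      rw [hpj]
      have hrjq := hrj j
      by_cases hp : 0 < r j
      · rw [if_pos hp]
        have h9 := hrB j hp
        have h10 := hw0 j hp
        rw [h10]
        push_cast
        linarith
      · rw [if_neg hp]
        have h9 := hw j (by omega)
        linarith
    · -- bank
      have hkb : k' = bank := by
        rw [hbank]
        exact Fin.ext (by simp only [Fin.val_last]; have := k'.isLt; omega)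
      have hπk : ∀ i, ¬ (π i = k') := fun i h => hπbank i (h.trans hkb)
      have hbk : bank = k' := hkb.symm
      have gc : ∑ i, g (π i, π (i + 1), t i) = 0 := by
        refine Finset.sum_eq_zero fun i _ => ?_
        rw [hgval, if_neg (hπk i), if_neg (hπk (i + 1))]
        simp
      have gpos : ∑ i, (if 0 < r i then g (π i, bank, B) else 0) = -((k : ℤ) * B) := by
        have h8 : ∀ i, (if 0 < r i then g (π i, bank, B) else 0)
            = -(if 0 < r i then B else 0) := by
          intro i
          rw [hgval, if_neg (hπk i), if_pos hbk]
          split_ifs <;> ring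
        rw [Finset.sum_congr rfl fun i _ => h8 i, Finset.sum_neg_distrib, eB]
      have gneg : ∑ i, (w i : ℤ) * g (bank, π i, B) = (k : ℤ) * B := by
        have h8 : ∀ i, (w i : ℤ) * g (bank, π i, B) = (w i : ℤ) * B := by
          intro i
          rw [hgval, if_neg (hπk i), if_pos hbk]
          ring
        rw [Finset.sum_congr rfl fun i _ => h8 i, hwsum]
      have gp1 : g (π 0, bank, 1) = -1 := by
        rw [hgval, if_neg (hπk 0), if_pos hbk]; ring
      have gp2 : g (bank, π 0, 1) = 1 := by
        rw [hgval, if_pos hbk, if_neg (hπk 0)]; ring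
      rw [gc, gpos, gneg, gp1, gp2, dif_neg hk']
      ring

/-- correctness and transaction count of the three-round Conspiracy Santa
protocol.  With `n` participants with balances `p i < B` summing to zero, plus a piggy
bank (participant `n`, balance `0`), there is a settling list of exactly `3 · n`
transactions, each of amount between `1` and `B`. -/
theorem conspiracy_santa_three_n (n : ℕ) (hn : 2 ≤ n) (B : ℤ) (hB : 1 ≤ B)
    (p : Fin n → ℤ) (hsum : ∑ i, p i = 0) (hlt : ∀ i, p i < B) :
    ∃ L : List (Txn (n + 1)),
      L.length = 3 * n ∧
      (∀ t ∈ L, t.1 ≠ t.2.1 ∧ 1 ≤ t.2.2 ∧ t.2.2 ≤ B) ∧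
      Settles L (fun i => if h : (i : ℕ) < n then p ⟨i, h⟩ else 0) := by
  obtain ⟨n', rfl⟩ : ∃ m, n = m + 2 := ⟨n - 2, by omega⟩
  exact cs_aux n' B hB p hsum hlt
end

section
/- Let n ≥ 2, let B ≥ 1 be an integer, and let p : Fin n → ℤ satisfy ∑ i, p i = 0 and p i < B for all i. Let t 1 be any integer with 0 ≤ t 1 ≤ B − 1, set s 1 = 1 + t 1, and define recursively for i = 2, …, n: s i = 1 + ((p i + s (i−1) − 1) mod B) + (i − 1) · B, where mod denotes the nonnegative remainder. Define the new balance vector q by q i = p i + s (i−1) − s i for 2 ≤ i ≤ n and q 1 = p 1 − s 1 + s n − n · B. Then: (a) (i − 1) · B + 1 ≤ s i ≤ i · B for all i (in particular s (i−1) < s i, so every participant sends more than they received); (b) B divides q i for all i; (c) q i ≤ 0 for all i; (d) ∑ i, q i = −n · B. -/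
/-- correctness of the merged round (Protocol 4) of the faster Conspiracy
Santa protocol.  Participants are indexed `1, …, n`, `p i` is the balance of
participant `i`, `s i` is the amount sent by participant `i`
(`s 1 = 1 + t1` with `t1 ∈ [0, B-1]`, then
`s i = 1 + ((p i + s (i-1) - 1) mod B) + (i - 1) · B`), and `q` is the resulting
balance vector, where participant 1 additionally pays `n · B` to the piggy bank.
Then `(i - 1) · B + 1 ≤ s i ≤ i · B` for all `i`, every new balance is a nonpositive
multiple of `B`, and the new balances sum to `-n · B`. -/
theorem merged_round_correct (n : ℕ) (hn : 2 ≤ n) (B : ℤ) (hB : 1 ≤ B)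
    (p s q : ℕ → ℤ) (t1 : ℤ)
    (hsum : ∑ i ∈ Finset.Icc 1 n, p i = 0)
    (hlt : ∀ i ∈ Finset.Icc 1 n, p i < B)
    (ht1 : 0 ≤ t1 ∧ t1 ≤ B - 1)
    (hs1 : s 1 = 1 + t1)
    (hsrec : ∀ i, 2 ≤ i → i ≤ n →
      s i = 1 + (p i + s (i - 1) - 1) % B + ((i : ℤ) - 1) * B)
    (hq1 : q 1 = p 1 - s 1 + s n - (n : ℤ) * B)
    (hqi : ∀ i, 2 ≤ i → i ≤ n → q i = p i + s (i - 1) - s i) :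
    (∀ i ∈ Finset.Icc 1 n, ((i : ℤ) - 1) * B + 1 ≤ s i ∧ s i ≤ (i : ℤ) * B) ∧
    (∀ i ∈ Finset.Icc 1 n, B ∣ q i) ∧
    (∀ i ∈ Finset.Icc 1 n, q i ≤ 0) ∧
    (∑ i ∈ Finset.Icc 1 n, q i = -(n : ℤ) * B) := by
  obtain ⟨ht0, ht1'⟩ := ht1
  have hBpos : 0 < B := hB
  have hmod : ∀ x : ℤ, 0 ≤ x % B ∧ x % B ≤ B - 1 := fun x =>
    ⟨Int.emod_nonneg x (by omega), by have := Int.emod_lt_of_pos x hBpos; omega⟩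
  -- (a) bounds on s
  have hbound : ∀ i ∈ Finset.Icc 1 n, ((i : ℤ) - 1) * B + 1 ≤ s i ∧ s i ≤ (i : ℤ) * B := by
    intro i hi
    simp only [Finset.mem_Icc] at hi
    rcases eq_or_lt_of_le hi.1 with h1 | h1
    · rw [← h1, hs1]
      push_cast
      constructor <;> linarith
    · have h2 : 2 ≤ i := h1
      rw [hsrec i h2 hi.2]
      obtain ⟨ha, hb⟩ := hmod (p i + s (i - 1) - 1)
      constructor
      · linarith
      · nlinarith
  -- divisibility for i ≥ 2
  have hdvd2 : ∀ i, 2 ≤ i → i ≤ n → B ∣ q i := by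
    intro i h2 hn'
    exact ⟨(p i + s (i - 1) - 1) / B - ((i : ℤ) - 1), by
      rw [hqi i h2 hn', hsrec i h2 hn', Int.emod_def]; ring⟩
  -- telescoping
  have tel : ∀ m, 1 ≤ m → (∑ i ∈ Finset.Icc 2 m, (s (i - 1) - s i)) = s 1 - s m := by
    intro m hm
    induction m with
    | zero => omega
    | succ k ih =>
      rcases Nat.eq_or_lt_of_le hm with h | h
      · rw [← h]; simp
      · have hk : 1 ≤ k := by omega
        rw [Finset.sum_Icc_succ_top (by omega : 2 ≤ k + 1), ih hk]
        simp
  have h12 : Finset.Icc 1 n = insert 1 (Finset.Icc 2 n) := by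
    ext x; simp only [Finset.mem_Icc, Finset.mem_insert]; omega
  have hnot : (1 : ℕ) ∉ Finset.Icc 2 n := by simp
  -- sum of q
  have hq2sum : ∑ i ∈ Finset.Icc 2 n, q i
      = (∑ i ∈ Finset.Icc 2 n, p i) + (s 1 - s n) := by
    have : ∑ i ∈ Finset.Icc 2 n, q i
        = ∑ i ∈ Finset.Icc 2 n, (p i + (s (i - 1) - s i)) := by
      refine Finset.sum_congr rfl fun i hi => ?_
      simp only [Finset.mem_Icc] at hi
      rw [hqi i hi.1 hi.2]; ring
    rw [this, Finset.sum_add_distrib, tel n (by omega)]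
  have hp2 : ∑ i ∈ Finset.Icc 2 n, p i = -p 1 := by
    rw [h12, Finset.sum_insert hnot] at hsum; linarith
  have key : ∑ i ∈ Finset.Icc 1 n, q i = -(n : ℤ) * B := by
    rw [h12, Finset.sum_insert hnot, hq2sum, hp2, hq1]; ring
  -- divisibility for i = 1
  have hdvdsum : B ∣ ∑ i ∈ Finset.Icc 2 n, q i :=
    Finset.dvd_sum fun i hi => by
      simp only [Finset.mem_Icc] at hi; exact hdvd2 i hi.1 hi.2
  have hq1val : q 1 = -(n : ℤ) * B - ∑ i ∈ Finset.Icc 2 n, q i := by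
    rw [h12, Finset.sum_insert hnot] at key; linarith
  have hdvd1 : B ∣ q 1 := by
    rw [hq1val]
    exact dvd_sub ⟨-(n : ℤ), by ring⟩ hdvdsum
  have hdvd : ∀ i ∈ Finset.Icc 1 n, B ∣ q i := by
    intro i hi
    simp only [Finset.mem_Icc] at hi
    rcases eq_or_lt_of_le hi.1 with h1 | h1
    · rw [← h1]; exact hdvd1
    · exact hdvd2 i h1 hi.2
  -- nonpositivity
  have hqlt : ∀ i ∈ Finset.Icc 1 n, q i < B := by
    intro i hi
    have hpi := hlt i hi
    simp only [Finset.mem_Icc] at hi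
    rcases eq_or_lt_of_le hi.1 with h1 | h1
    · have hs1b := (hbound 1 (by simp; omega)).1
      have hsnb := (hbound n (by simp; omega)).2
      push_cast at hs1b
      rw [← h1, hq1]
      rw [← h1] at hpi
      nlinarith
    · have h2 : 2 ≤ i := h1
      have hib := (hbound i (by simp only [Finset.mem_Icc]; omega)).1
      have hib' := (hbound (i - 1) (by simp only [Finset.mem_Icc]; omega)).2
      have hcast : ((i - 1 : ℕ) : ℤ) = (i : ℤ) - 1 := by
        push_cast [Nat.cast_sub (by omega : 1 ≤ i)]; ring
      rw [hcast] at hib'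
      rw [hqi i h2 hi.2]
      linarith
  have hqnp : ∀ i ∈ Finset.Icc 1 n, q i ≤ 0 := by
    intro i hi
    by_contra hpos
    push_neg at hpos
    have := Int.le_of_dvd hpos (hdvd i hi)
    have := hqlt i hi
    omega
  exact ⟨hbound, hdvd, hqnp, key⟩
end
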